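/- arXiv:1708.04836 — 4 statements merged into one kernel-verified Lean document; each statement's English description precedes it below -/
import Mathlib

section
/- Let X_1, X_2, X_3, X_4 be positive definite complex d×d matrices. Then for every t ∈ ℝ, Tr[ X_4 X_3^{(1+it)/2} X_2^{(1+it)/2} X_1 X_2^{(1−it)/2} X_3^{(1−it)/2} ] = Tr_{ℂ^d ⊗ ℂ^d}[ P_1 · (X_2 ⊗ conj(X_3))^{(1+it)/2} (X_1 ⊗ conj(X_4)) (X_2 ⊗ conj(X_3))^{(1−it)/2} ]. -/
open MeasureTheory
open scoped Kronecker

noncomputable section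

/-- Entrywise complex conjugate of a matrix (in the standard basis). -/
def mconj {ι κ : Type*} (X : Matrix ι κ ℂ) : Matrix ι κ ℂ :=
  X.map (starRingEnd ℂ)

/-- `C^b X C^b` : `X` itself if `b = 0`, and the entrywise conjugate otherwise. -/
def conjIf {ι : Type*} (b : ℕ) (X : Matrix ι ι ℂ) : Matrix ι ι ℂ :=
  if b = 0 then X else mconj X

/-- The Thue–Morse sequence `β` : `β 0 = 0`, `β (2j) = β j`, `β (2j+1) = 1 - β j`. -/
def tm : ℕ → ℕ
  | 0 => 0
  | (n + 1) => if (n + 1) % 2 = 0 then tm ((n + 1) / 2) else 1 - tm ((n + 1) / 2)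
  decreasing_by all_goals omega

/-- The (principal) logarithm of a positive definite matrix, defined through the spectral
decomposition (junk value `0` for non-Hermitian input). -/
def matLog {ι : Type*} [Fintype ι] [DecidableEq ι] (A : Matrix ι ι ℂ) : Matrix ι ι ℂ :=
  if h : A.IsHermitian then
    (h.eigenvectorUnitary : Matrix ι ι ℂ) *
      Matrix.diagonal (fun i => (Real.log (h.eigenvalues i) : ℂ)) *
      star (h.eigenvectorUnitary : Matrix ι ι ℂ)
  else 0

/-- Complex matrix powers `A ^ z` of a positive definite matrix, via the spectral
decomposition `A = Σ λ_j P_j ↦ Σ λ_j^z P_j` (junk value `0` for non-Hermitian input). -/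
def mcpow {ι : Type*} [Fintype ι] [DecidableEq ι] (A : Matrix ι ι ℂ) (z : ℂ) : Matrix ι ι ℂ :=
  if h : A.IsHermitian then
    (h.eigenvectorUnitary : Matrix ι ι ℂ) *
      Matrix.diagonal (fun i => (h.eigenvalues i : ℂ) ^ z) *
      star (h.eigenvectorUnitary : Matrix ι ι ℂ)
  else 0

/-- The matrix exponential. -/
def mexp {ι : Type*} [Fintype ι] [DecidableEq ι] (A : Matrix ι ι ℂ) : Matrix ι ι ℂ :=
  NormedSpace.exp A

/-- `T_X(Y) = ∫_0^∞ (X+τ)⁻¹ Y (X+τ)⁻¹ dτ` (entrywise Bochner integral). -/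
def Tmap {ι : Type*} [Fintype ι] [DecidableEq ι] (X Y : Matrix ι ι ℂ) : Matrix ι ι ℂ :=
  Matrix.of fun i j =>
    ∫ τ in Set.Ioi (0 : ℝ), ((X + (τ : ℂ) • 1)⁻¹ * Y * (X + (τ : ℂ) • 1)⁻¹) i j

/-- The probability density `β(t) = (π/2)(1 + cosh(π t))⁻¹`. -/
def betaD (t : ℝ) : ℝ := (Real.pi / 2) * (1 + Real.cosh (Real.pi * t))⁻¹

/-- The non-normalized maximally entangled projector `P₁ = |Ω₁⟩⟨Ω₁|`,
`Ω₁ = Σ_l e_l ⊗ e_l`, on `ℂ^d ⊗ ℂ^d`. -/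
def P1mat (d : ℕ) : Matrix (Fin d × Fin d) (Fin d × Fin d) ℂ :=
  Matrix.of fun x y => (if x.1 = x.2 then (1 : ℂ) else 0) * (if y.1 = y.2 then (1 : ℂ) else 0)

/-- Tensor (Kronecker) product of `M` single-site matrices on `(ℂ^d)^{⊗M}`. -/
def bigTensor {M d : ℕ} (B : Fin M → Matrix (Fin d) (Fin d) ℂ) :
    Matrix (Fin M → Fin d) (Fin M → Fin d) ℂ :=
  Matrix.of fun x y => ∏ i : Fin M, B i (x i) (y i)

/-- The condition that the coordinates `a, …, a+m-1` of `x` coincide with the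
coordinates `a+m, …, a+2m-1`. -/
def pairCond {M d : ℕ} (a m : ℕ) (x : Fin M → Fin d) : Prop :=
  ∀ i : ℕ, ∀ (h₁ : a + i < M) (h₂ : a + m + i < M), i < m →
    x ⟨a + i, h₁⟩ = x ⟨a + m + i, h₂⟩

open Classical in
/-- The coefficient `⟨x|Ω_m⟩` of the non-normalized maximally entangled vector `Ω_m`
placed on the `2m` coordinates starting at `a`. -/
def omInd {M d : ℕ} (a m : ℕ) (x : Fin M → Fin d) : ℂ :=
  if pairCond a m x then 1 else 0

/-- The non-normalized maximally entangled projector `P_m = |Ω_m⟩⟨Ω_m|` placed on the `2m`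
coordinates starting at `a` of `(ℂ^d)^{⊗M}` (no identity padding: to be used when `2m = M`,
or as a tensor factor via `omInd`). -/
def embProj (d M a m : ℕ) : Matrix (Fin M → Fin d) (Fin M → Fin d) ℂ :=
  Matrix.of fun x y => omInd a m x * omInd a m y

open Classical in
/-- `B ⊗ I^{⊗(M-p)}` : a matrix `B` on the first `p` factors of `(ℂ^d)^{⊗M}`, tensored with
the identity on the remaining factors. -/
def padId {d : ℕ} (p M : ℕ) (h : p ≤ M) (B : Matrix (Fin p → Fin d) (Fin p → Fin d) ℂ) :
    Matrix (Fin M → Fin d) (Fin M → Fin d) ℂ :=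
  Matrix.of fun x y =>
    B (fun i => x (Fin.castLE h i)) (fun i => y (Fin.castLE h i)) *
      (if ∀ i : Fin M, p ≤ (i : ℕ) → x i = y i then 1 else 0)

/-- Tensor product of `m` two-site matrices, on `(ℂ^d ⊗ ℂ^d)^{⊗m} ≅ (ℂ^d)^{⊗2m}` (the `j`-th
factor acting on the coordinates `2j, 2j+1`). -/
def bigTensor2 {m d : ℕ} (B : Fin m → Matrix (Fin d × Fin d) (Fin d × Fin d) ℂ) :
    Matrix (Fin (2 * m) → Fin d) (Fin (2 * m) → Fin d) ℂ :=
  Matrix.of fun x y => ∏ j : Fin m,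
    B j (x ⟨2 * (j : ℕ), by have := j.isLt; omega⟩, x ⟨2 * (j : ℕ) + 1, by have := j.isLt; omega⟩)
        (y ⟨2 * (j : ℕ), by have := j.isLt; omega⟩, y ⟨2 * (j : ℕ) + 1, by have := j.isLt; omega⟩)


section AuxFMPR

open Matrix Polynomial
open scoped Kronecker

set_option linter.unusedSectionVars false

variable {n m : Type*} [Fintype n] [DecidableEq n] [Fintype m] [DecidableEq m]

lemma conj_pow' (W D : Matrix n n ℂ) (hW : W * star W = 1) (hW' : star W * W = 1) (k : ℕ) :
    (W * D * star W) ^ k = W * D ^ k * star W := by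
  induction k with
  | zero => simpa using hW.symm
  | succ k ih =>
      rw [pow_succ, ih, pow_succ,
        show W * D ^ k * star W * (W * D * star W)
            = W * (D ^ k * ((star W * W) * (D * star W))) by simp only [Matrix.mul_assoc], hW']
      simp only [Matrix.one_mul, Matrix.mul_assoc]

lemma aeval_conj' (W D : Matrix n n ℂ) (hW : W * star W = 1) (hW' : star W * W = 1)
    (p : ℂ[X]) : aeval (W * D * star W) p = W * aeval D p * star W := by
  rw [aeval_eq_sum_range, aeval_eq_sum_range, Finset.mul_sum, Finset.sum_mul]
  exact Finset.sum_congr rfl fun i _ => by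
    rw [conj_pow' W D hW hW' i, Matrix.mul_smul, Matrix.smul_mul]

lemma aeval_diagonal' (d : n → ℂ) (p : ℂ[X]) :
    aeval (Matrix.diagonal d) p = Matrix.diagonal (fun i => p.eval (d i)) := by
  rw [aeval_eq_sum_range]
  ext i j
  rw [Matrix.sum_apply]
  simp only [diagonal_pow, Matrix.smul_apply, Matrix.diagonal_apply, smul_eq_mul]
  by_cases h : i = j
  · subst h
    simp only [if_pos rfl, eval_eq_sum_range]
    rfl
  · simp [h]

lemma hermFun_unique (A : Matrix n n ℂ) (hA : A.IsHermitian) (f : ℝ → ℂ)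
    (V : Matrix n n ℂ) (hV : V * star V = 1) (hV' : star V * V = 1) (μ : n → ℝ)
    (hdec : A = V * Matrix.diagonal (fun i => (μ i : ℂ)) * star V) :
    (hA.eigenvectorUnitary : Matrix n n ℂ) *
        Matrix.diagonal (fun i => f (hA.eigenvalues i)) *
        star (hA.eigenvectorUnitary : Matrix n n ℂ)
      = V * Matrix.diagonal (fun i => f (μ i)) * star V := by
  classical
  set s : Finset ℂ :=
    (Finset.univ.image fun i => ((hA.eigenvalues i : ℝ) : ℂ)) ∪
      (Finset.univ.image fun i => ((μ i : ℝ) : ℂ)) with hs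
  set p : ℂ[X] := Lagrange.interpolate s id (fun x => f x.re) with hp
  have hnode : ∀ x ∈ s, p.eval x = f x.re := by
    intro x hx
    rw [hp]
    simpa using Lagrange.eval_interpolate_at_node (v := id) (r := fun x => f x.re)
      Function.injective_id.injOn hx
  have hU1 : (hA.eigenvectorUnitary : Matrix n n ℂ) *
      star (hA.eigenvectorUnitary : Matrix n n ℂ) = 1 :=
    Unitary.mul_star_self_of_mem (hA.eigenvectorUnitary).2
  have hU2 : star (hA.eigenvectorUnitary : Matrix n n ℂ) *
      (hA.eigenvectorUnitary : Matrix n n ℂ) = 1 :=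
    Unitary.star_mul_self_of_mem (hA.eigenvectorUnitary).2
  have e1 : aeval A p = (hA.eigenvectorUnitary : Matrix n n ℂ) *
      Matrix.diagonal (fun i => f (hA.eigenvalues i)) *
      star (hA.eigenvectorUnitary : Matrix n n ℂ) := by
    conv_lhs => rw [hA.spectral_theorem, Unitary.conjStarAlgAut_apply]
    rw [aeval_conj' _ _ hU1 hU2, aeval_diagonal']
    have hfun : (fun i => p.eval (((hA.eigenvalues i : ℝ) : ℂ))) =
        fun i => f (hA.eigenvalues i) := funext fun i => ?_
    · rw [show (fun i => p.eval ((RCLike.ofReal ∘ hA.eigenvalues) i))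
          = fun i => f (hA.eigenvalues i) from hfun]
    have hmem : ((hA.eigenvalues i : ℝ) : ℂ) ∈ s := by
      rw [hs]
      exact Finset.mem_union_left _ (Finset.mem_image_of_mem _ (Finset.mem_univ i))
    have := hnode _ hmem
    simp only [Complex.ofReal_re] at this
    simpa using this
  have e2 : aeval A p = V * Matrix.diagonal (fun i => f (μ i)) * star V := by
    conv_lhs => rw [hdec]
    rw [aeval_conj' _ _ hV hV', aeval_diagonal']
    have hfun : (fun i => p.eval (((μ i : ℝ) : ℂ))) =
        fun i => f (μ i) := funext fun i => ?_
    · rw [hfun]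
    have hmem : ((μ i : ℝ) : ℂ) ∈ s := by
      rw [hs]
      exact Finset.mem_union_right _ (Finset.mem_image_of_mem _ (Finset.mem_univ i))
    have := hnode _ hmem
    simpa [Complex.ofReal_re] using this
  rw [← e1, e2]

open Matrix Polynomial
open scoped Kronecker

variable {n m : Type*} [Fintype n] [DecidableEq n] [Fintype m] [DecidableEq m]

lemma kron_conjTranspose (A : Matrix n n ℂ) (B : Matrix m m ℂ) :
    (A ⊗ₖ B)ᴴ = Aᴴ ⊗ₖ Bᴴ := by
  ext ⟨i, j⟩ ⟨k, l⟩
  simp [Matrix.conjTranspose_apply, Matrix.kroneckerMap_apply, mul_comm]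

lemma kron_isHermitian {A : Matrix n n ℂ} {B : Matrix m m ℂ}
    (hA : A.IsHermitian) (hB : B.IsHermitian) : (A ⊗ₖ B).IsHermitian := by
  rw [Matrix.IsHermitian, kron_conjTranspose, hA.eq, hB.eq]


open ComplexOrder in
lemma mcpow_kronecker (X : Matrix n n ℂ) (Y : Matrix m m ℂ)
    (hX : X.PosDef) (hY : Y.PosDef) (z : ℂ) :
    mcpow (X ⊗ₖ Y) z = mcpow X z ⊗ₖ mcpow Y z := by
  have hXh := hX.1
  have hYh := hY.1
  have hXY : (X ⊗ₖ Y).IsHermitian := kron_isHermitian hXh hYh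
  rw [mcpow, dif_pos hXY, mcpow, dif_pos hXh, mcpow, dif_pos hYh]
  set U := (hXh.eigenvectorUnitary : Matrix n n ℂ) with hU
  set W := (hYh.eigenvectorUnitary : Matrix m m ℂ) with hW
  have hU1 : U * star U = 1 := Unitary.mul_star_self_of_mem (hXh.eigenvectorUnitary).2
  have hU2 : star U * U = 1 := Unitary.star_mul_self_of_mem (hXh.eigenvectorUnitary).2
  have hW1 : W * star W = 1 := Unitary.mul_star_self_of_mem (hYh.eigenvectorUnitary).2
  have hW2 : star W * W = 1 := Unitary.star_mul_self_of_mem (hYh.eigenvectorUnitary).2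
  set V : Matrix (n × m) (n × m) ℂ := U ⊗ₖ W with hV
  have hstarV : star V = star U ⊗ₖ star W := kron_conjTranspose U W
  have hV1 : V * star V = 1 := by
    rw [hstarV, hV, ← Matrix.mul_kronecker_mul, hU1, hW1, Matrix.one_kronecker_one]
  have hV2 : star V * V = 1 := by
    rw [hstarV, hV, ← Matrix.mul_kronecker_mul, hU2, hW2, Matrix.one_kronecker_one]
  have hdec : X ⊗ₖ Y = V * Matrix.diagonal
      (fun p : n × m => ((hXh.eigenvalues p.1 * hYh.eigenvalues p.2 : ℝ) : ℂ)) * star V := by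
    conv_lhs => rw [hXh.spectral_theorem, hYh.spectral_theorem, Unitary.conjStarAlgAut_apply,
      Unitary.conjStarAlgAut_apply]
    rw [hstarV, hV, Matrix.mul_kronecker_mul, Matrix.mul_kronecker_mul,
      Matrix.diagonal_kronecker_diagonal]
    push_cast
    rfl
  have key := hermFun_unique (X ⊗ₖ Y) hXY (fun r => (r : ℂ) ^ z) V hV1 hV2 _ hdec
  rw [key]
  have hdiag : (Matrix.diagonal fun p : n × m =>
      ((hXh.eigenvalues p.1 * hYh.eigenvalues p.2 : ℝ) : ℂ) ^ z)
      = (Matrix.diagonal fun i => ((hXh.eigenvalues i : ℝ) : ℂ) ^ z) ⊗ₖ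
        (Matrix.diagonal fun j => ((hYh.eigenvalues j : ℝ) : ℂ) ^ z) := by
    rw [Matrix.diagonal_kronecker_diagonal]
    refine congrArg Matrix.diagonal (funext fun p => ?_)
    push_cast
    exact Complex.mul_cpow_ofReal_nonneg (hX.eigenvalues_pos p.1).le
      (hY.eigenvalues_pos p.2).le z
  rw [hdiag, hstarV, hV, ← Matrix.mul_kronecker_mul, ← Matrix.mul_kronecker_mul]

lemma mcpow_transpose (X : Matrix n n ℂ) (hX : X.IsHermitian) (z : ℂ) :
    mcpow Xᵀ z = (mcpow X z)ᵀ := by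
  have hXT : Xᵀ.IsHermitian := hX.transpose
  rw [mcpow, dif_pos hXT, mcpow, dif_pos hX]
  set U := (hX.eigenvectorUnitary : Matrix n n ℂ) with hU
  have hU1 : U * star U = 1 := Unitary.mul_star_self_of_mem (hX.eigenvectorUnitary).2
  have hU2 : star U * U = 1 := Unitary.star_mul_self_of_mem (hX.eigenvectorUnitary).2
  set V : Matrix n n ℂ := (star U)ᵀ with hV
  have hstarV : star V = Uᵀ := by
    rw [hV]
    ext i j
    simp [Matrix.conjTranspose_apply, Matrix.transpose_apply]
  have hV1 : V * star V = 1 := by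
    rw [hstarV, hV, ← Matrix.transpose_mul, hU1, Matrix.transpose_one]
  have hV2 : star V * V = 1 := by
    rw [hstarV, hV, ← Matrix.transpose_mul, hU2, Matrix.transpose_one]
  have hdec : Xᵀ = V * Matrix.diagonal (fun i => ((hX.eigenvalues i : ℝ) : ℂ)) * star V := by
    conv_lhs => rw [hX.spectral_theorem, Unitary.conjStarAlgAut_apply]
    rw [Matrix.transpose_mul, Matrix.transpose_mul, hstarV, hV, Matrix.mul_assoc,
      Matrix.diagonal_transpose]
    rfl
  have key := hermFun_unique Xᵀ hXT (fun r => (r : ℂ) ^ z) V hV1 hV2 _ hdec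
  rw [key, hstarV, hV, Matrix.transpose_mul, Matrix.transpose_mul,
    Matrix.diagonal_transpose, Matrix.mul_assoc]

lemma mconj_of_hermitian (X : Matrix n n ℂ) (hX : X.IsHermitian) : mconj X = Xᵀ := by
  ext i j
  simpa [mconj, Matrix.conjTranspose_apply, Matrix.transpose_apply] using
    congrFun (congrFun hX.eq j) i

lemma trace_P1_kron {d : ℕ} (A B : Matrix (Fin d) (Fin d) ℂ) :
    Matrix.trace (P1mat d * (A ⊗ₖ B)) = Matrix.trace (A * Bᵀ) := by
  have hdiag : ∀ x : Fin d × Fin d, (P1mat d * (A ⊗ₖ B)) x x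
      = if x.1 = x.2 then ∑ j : Fin d, A j x.1 * B j x.2 else 0 := by
    intro x
    rw [Matrix.mul_apply, Fintype.sum_prod_type]
    by_cases h : x.1 = x.2 <;>
      simp [h, P1mat, Matrix.kroneckerMap_apply, ite_mul, one_mul, zero_mul,
        Finset.sum_ite_eq', Finset.sum_ite_eq]
  rw [show Matrix.trace (P1mat d * (A ⊗ₖ B)) = ∑ x, (P1mat d * (A ⊗ₖ B)) x x from rfl]
  simp only [hdiag]
  rw [Fintype.sum_prod_type]
  simp only [Finset.sum_ite_eq, Finset.mem_univ, if_true]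
  rw [show Matrix.trace (A * Bᵀ) = ∑ i, ∑ j, A i j * B i j by
    simp [Matrix.trace, Matrix.diag, Matrix.mul_apply, Matrix.transpose_apply]]
  rw [Finset.sum_comm]

end AuxFMPR

open Matrix in
open ComplexOrder in
/-- Pointwise (in `t`) rewriting of the four-matrix trace via the maximally entangled
projector `P₁` on `ℂ^d ⊗ ℂ^d`. -/
theorem four_matrix_pointwise_rewriting {d : ℕ} (X₁ X₂ X₃ X₄ : Matrix (Fin d) (Fin d) ℂ)
    (h₁ : X₁.PosDef) (h₂ : X₂.PosDef) (h₃ : X₃.PosDef) (h₄ : X₄.PosDef) (t : ℝ) :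
    Matrix.trace (X₄ * mcpow X₃ ((1 + Complex.I * t) / 2) *
        mcpow X₂ ((1 + Complex.I * t) / 2) * X₁ * mcpow X₂ ((1 - Complex.I * t) / 2) *
        mcpow X₃ ((1 - Complex.I * t) / 2)) =
      Matrix.trace (P1mat d * mcpow (X₂ ⊗ₖ mconj X₃) ((1 + Complex.I * t) / 2) *
        (X₁ ⊗ₖ mconj X₄) * mcpow (X₂ ⊗ₖ mconj X₃) ((1 - Complex.I * t) / 2)) := by
  set zp : ℂ := (1 + Complex.I * t) / 2 with hzp
  set zm : ℂ := (1 - Complex.I * t) / 2 with hzm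
  have hc3 : mconj X₃ = X₃ᵀ := mconj_of_hermitian X₃ h₃.1
  have hc4 : mconj X₄ = X₄ᵀ := mconj_of_hermitian X₄ h₄.1
  have h3T : X₃ᵀ.PosDef := h₃.transpose
  rw [hc3, hc4, mcpow_kronecker X₂ X₃ᵀ h₂ h3T zp, mcpow_kronecker X₂ X₃ᵀ h₂ h3T zm,
    mcpow_transpose X₃ h₃.1 zp, mcpow_transpose X₃ h₃.1 zm]
  set P := mcpow X₃ zp
  set Q := mcpow X₂ zp
  set R := mcpow X₂ zm
  set S := mcpow X₃ zm
  have hcomb : P1mat d * (Q ⊗ₖ Pᵀ) * (X₁ ⊗ₖ X₄ᵀ) * (R ⊗ₖ Sᵀ)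
      = P1mat d * ((Q * (X₁ * R)) ⊗ₖ (Pᵀ * (X₄ᵀ * Sᵀ))) := by
    simp only [Matrix.mul_assoc]
    rw [← Matrix.mul_kronecker_mul, ← Matrix.mul_kronecker_mul]
  rw [hcomb, trace_P1_kron]
  have hBt : (Pᵀ * (X₄ᵀ * Sᵀ))ᵀ = S * X₄ * P := by
    rw [Matrix.transpose_mul, Matrix.transpose_mul, Matrix.transpose_transpose,
      Matrix.transpose_transpose, Matrix.transpose_transpose, Matrix.mul_assoc]
  rw [hBt]
  have hL : X₄ * P * Q * X₁ * R * S = (X₄ * P) * (Q * (X₁ * (R * S))) := by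
    simp only [Matrix.mul_assoc]
  rw [hL, Matrix.trace_mul_comm]
  exact congrArg Matrix.trace (by simp only [Matrix.mul_assoc])


end
end

section
/- Let A_1 and A_2 be positive definite complex d×d matrices. Then ∫_ℝ A_2^{(1+it)/2} A_1 A_2^{(1−it)/2} β(t) dt = T_{A_2^{−1}}(A_1), i.e. ∫_ℝ A_2^{(1+it)/2} A_1 A_2^{(1−it)/2} β(t) dt = ∫_0^∞ (A_2^{−1}+τI)^{−1} A_1 (A_2^{−1}+τI)^{−1} dτ. -/
open MeasureTheory
open scoped Kronecker

noncomputable section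

set_option maxHeartbeats 1000000

section AuxBeta
open MeasureTheory Set Real Filter




lemma betaD_pos (t : ℝ) : 0 < betaD t := by
  have h : 0 < 1 + Real.cosh (Real.pi * t) := by positivity
  unfold betaD; positivity

lemma betaD_eq_exp (t : ℝ) :
    betaD t = Real.pi * Real.exp (Real.pi * t) / (1 + Real.exp (Real.pi * t)) ^ 2 := by
  have he : 0 < Real.exp (Real.pi * t) := Real.exp_pos _
  have h : 0 < 1 + Real.cosh (Real.pi * t) := by positivity
  unfold betaD
  rw [Real.cosh_eq, Real.exp_neg]
  field_simp
  ring

lemma continuous_betaD : Continuous betaD := by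
  have hc : Continuous fun t : ℝ => 1 + Real.cosh (Real.pi * t) := by continuity
  exact continuous_const.mul (hc.inv₀ fun t => by positivity)

lemma integrableOn_inv_sq : IntegrableOn (fun x : ℝ => ((1 + x) ^ 2)⁻¹) (Ioi (0:ℝ)) := by
  have hderiv : ∀ x ∈ Ici (0:ℝ), HasDerivAt (fun x : ℝ => -(1 + x)⁻¹) (((1 + x) ^ 2)⁻¹) x := by
    intro x hx
    simp only [mem_Ici] at hx
    have h1 : HasDerivAt (fun x : ℝ => 1 + x) 1 x := (hasDerivAt_id x).const_add 1
    have hne : (1 + x) ≠ 0 := by positivity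
    have h2 := (h1.inv hne).neg
    refine h2.congr_deriv ?_
    field_simp
  have htend : Filter.Tendsto (fun x : ℝ => -(1 + x)⁻¹) Filter.atTop (nhds 0) := by
    rw [show (0:ℝ) = -0 by ring]
    exact (tendsto_inv_atTop_zero.comp (Filter.tendsto_atTop_add_const_left _ 1 Filter.tendsto_id)).neg
  exact integrableOn_Ioi_deriv_of_nonneg' hderiv (fun x hx => by positivity) htend

lemma range_exp_pi : (fun t : ℝ => Real.exp (Real.pi * t)) '' Set.univ = Set.Ioi (0:ℝ) := by
  rw [Set.image_univ]
  ext x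
  constructor
  · rintro ⟨t, rfl⟩; exact Real.exp_pos _
  · intro hx
    refine ⟨Real.log x / Real.pi, ?_⟩
    show Real.exp (Real.pi * (Real.log x / Real.pi)) = x
    rw [mul_div_cancel₀ _ (Real.pi_ne_zero), Real.exp_log hx]

lemma hasDerivAt_exp_pi (t : ℝ) :
    HasDerivAt (fun t : ℝ => Real.exp (Real.pi * t)) (Real.pi * Real.exp (Real.pi * t)) t := by
  have h1 : HasDerivAt (fun t : ℝ => Real.pi * t) Real.pi t := by
    simpa using (hasDerivAt_id t).const_mul Real.pi
  simpa [mul_comm] using h1.exp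

lemma injOn_exp_pi : Set.InjOn (fun t : ℝ => Real.exp (Real.pi * t)) Set.univ := by
  intro a _ b _ h
  have := Real.exp_injective h
  exact mul_left_cancel₀ Real.pi_ne_zero this

/-- substitution x = exp (π t) -/
lemma subst_exp (g : ℝ → ℂ) :
    ∫ x in Set.Ioi (0:ℝ), g x
      = ∫ t : ℝ, (Real.pi * Real.exp (Real.pi * t)) • g (Real.exp (Real.pi * t)) := by
  rw [← range_exp_pi,
    integral_image_eq_integral_abs_deriv_smul MeasurableSet.univ
      (fun t _ => (hasDerivAt_exp_pi t).hasDerivWithinAt) injOn_exp_pi g,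
    setIntegral_univ]
  congr 1
  funext t
  rw [abs_of_pos (by positivity)]

lemma integrable_betaD : Integrable betaD := by
  rw [← integrableOn_univ]
  have h := (integrableOn_image_iff_integrableOn_abs_deriv_smul MeasurableSet.univ
    (fun t _ => (hasDerivAt_exp_pi t).hasDerivWithinAt) injOn_exp_pi
    (fun x : ℝ => ((1 + x) ^ 2)⁻¹)).mp (by rw [range_exp_pi]; exact integrableOn_inv_sq)
  apply h.congr_fun _ MeasurableSet.univ
  intro t _
  simp only [smul_eq_mul]
  rw [betaD_eq_exp, abs_of_pos (by positivity)]
  field_simp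

lemma fourier_eq_mellin (s : ℝ) :
    (∫ x in Set.Ioi (0:ℝ), (x:ℂ) ^ (Complex.I * ((s/Real.pi : ℝ) : ℂ)) / (1 + (x:ℂ)) ^ 2)
      = ∫ t : ℝ, Complex.exp (Complex.I * s * t) * ((betaD t : ℝ) : ℂ) := by
  rw [subst_exp]
  congr 1
  funext t
  have he : (0:ℝ) < Real.exp (Real.pi * t) := Real.exp_pos _
  have hcpow : ((Real.exp (Real.pi * t) : ℝ) : ℂ) ^ (Complex.I * ((s/Real.pi : ℝ) : ℂ))
      = Complex.exp (Complex.I * s * t) := by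
    rw [Complex.ofReal_exp, Complex.cpow_def_of_ne_zero (Complex.exp_ne_zero _),
      Complex.log_exp (by simp [Real.pi_pos]) (by simp [Real.pi_pos.le])]
    congr 1
    have hpi : ((Real.pi : ℝ) : ℂ) ≠ 0 := Complex.ofReal_ne_zero.mpr Real.pi_ne_zero
    push_cast
    field_simp
  rw [hcpow, betaD_eq_exp, Complex.real_smul]
  have h1 : ((1:ℂ) + (Real.exp (Real.pi * t) : ℝ)) ^ 2
      = (((1 + Real.exp (Real.pi * t)) ^ 2 : ℝ) : ℂ) := by push_cast; ring
  rw [h1]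
  have h2 : ((1 + Real.exp (Real.pi * t)) ^ 2 : ℝ) ≠ 0 := by positivity
  push_cast
  field_simp


lemma image_ratio : (fun y : ℝ => y / (1 - y)) '' Set.Ioo 0 1 = Set.Ioi (0:ℝ) := by
  ext x
  constructor
  · rintro ⟨y, ⟨hy0, hy1⟩, rfl⟩
    exact div_pos hy0 (by linarith)
  · intro hx
    simp only [Set.mem_Ioi] at hx
    refine ⟨x / (1 + x), ⟨div_pos hx (by linarith), (div_lt_one (by linarith)).mpr (by linarith)⟩, ?_⟩
    show (x / (1 + x)) / (1 - x / (1 + x)) = x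
    have h1 : (1:ℝ) + x ≠ 0 := by positivity
    field_simp
    ring

lemma injOn_ratio : Set.InjOn (fun y : ℝ => y / (1 - y)) (Set.Ioo 0 1) := by
  rintro a ⟨ha0, ha1⟩ b ⟨hb0, hb1⟩ h
  simp only at h
  have h1 : (1:ℝ) - a ≠ 0 := by intro h'; linarith
  have h2 : (1:ℝ) - b ≠ 0 := by intro h'; linarith
  field_simp at h
  linarith

lemma hasDerivAt_ratio (y : ℝ) (hy : y ∈ Set.Ioo (0:ℝ) 1) :
    HasDerivAt (fun y : ℝ => y / (1 - y)) (((1 - y) ^ 2)⁻¹) y := by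
  obtain ⟨hy0, hy1⟩ := hy
  have h1 : (1:ℝ) - y ≠ 0 := by intro h'; linarith
  have := (hasDerivAt_id y).div ((hasDerivAt_id y).const_sub 1) h1
  refine this.congr_deriv ?_
  simp only [id]
  field_simp
  ring

lemma mellin_eq_beta (w : ℂ) :
    (∫ x in Set.Ioi (0:ℝ), (x:ℂ) ^ w / (1 + (x:ℂ)) ^ 2) = Complex.betaIntegral (1 + w) (1 - w) := by
  rw [← image_ratio,
    integral_image_eq_integral_abs_deriv_smul measurableSet_Ioo
      (fun y hy => (hasDerivAt_ratio y hy).hasDerivWithinAt) injOn_ratio,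
    Complex.betaIntegral, intervalIntegral.integral_of_le zero_le_one,
    integral_Ioc_eq_integral_Ioo]
  refine setIntegral_congr_fun measurableSet_Ioo (fun y hy => ?_)
  obtain ⟨hy0, hy1⟩ := hy
  have h1 : (0:ℝ) < 1 - y := by linarith
  have h1' : ((1 - y : ℝ) : ℂ) ≠ 0 := Complex.ofReal_ne_zero.mpr h1.ne'
  have hsplit : ((y / (1 - y) : ℝ) : ℂ) ^ w = (y:ℂ) ^ w * (((1 - y : ℝ):ℂ) ^ w)⁻¹ := by
    rw [div_eq_mul_inv, Complex.ofReal_mul, Complex.mul_cpow_ofReal_nonneg hy0.le (by positivity),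
      Complex.ofReal_inv, Complex.inv_cpow]
    rw [Complex.arg_ofReal_of_nonneg h1.le]
    exact Real.pi_ne_zero.symm
  have hden : (1:ℂ) + ((y / (1 - y) : ℝ) : ℂ) = (((1 - y)⁻¹ : ℝ) : ℂ) := by
    rw [show (1 - y)⁻¹ = 1 + y / (1 - y) by field_simp; ring]
    push_cast
    ring
  rw [Complex.real_smul, hden, hsplit, abs_of_pos (by positivity)]
  have e1 : (1:ℂ) + w - 1 = w := by ring
  have e2 : (1:ℂ) - w - 1 = -w := by ring
  rw [e1, e2, show ((1:ℂ) - (y:ℂ)) = ((1 - y : ℝ) : ℂ) by push_cast; ring,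
    Complex.cpow_neg]
  have hcpow_ne : ((1 - y : ℝ):ℂ) ^ w ≠ 0 := by
    intro h
    rw [Complex.cpow_eq_zero_iff] at h
    exact h1' h.1
  push_cast at hcpow_ne h1' ⊢
  field_simp


lemma beta_gamma (r : ℝ) :
    Complex.betaIntegral (1 + Complex.I * (r:ℂ)) (1 - Complex.I * (r:ℂ))
      = Complex.Gamma (1 + Complex.I * (r:ℂ)) * Complex.Gamma (1 - Complex.I * (r:ℂ)) := by
  have h1 : (0:ℝ) < (1 + Complex.I * (r:ℂ)).re := by simp
  have h2 : (0:ℝ) < (1 - Complex.I * (r:ℂ)).re := by simp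
  have := Complex.Gamma_mul_Gamma_eq_betaIntegral h1 h2
  rw [show (1 + Complex.I * (r:ℂ)) + (1 - Complex.I * (r:ℂ)) = 2 by ring] at this
  have hG2 : Complex.Gamma 2 = 1 := by
    rw [show (2:ℂ) = 1 + 1 by norm_num, Complex.Gamma_add_one 1 one_ne_zero,
      Complex.Gamma_one, mul_one]
  rw [this, hG2, one_mul]

lemma gamma_prod (r : ℝ) (hr : r ≠ 0) :
    Complex.Gamma (1 + Complex.I * (r:ℂ)) * Complex.Gamma (1 - Complex.I * (r:ℂ))
      = ((Real.pi * r / Real.sinh (Real.pi * r) : ℝ) : ℂ) := by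
  have hw : Complex.I * (r:ℂ) ≠ 0 :=
    mul_ne_zero Complex.I_ne_zero (Complex.ofReal_ne_zero.mpr hr)
  rw [show (1:ℂ) + Complex.I * (r:ℂ) = Complex.I * (r:ℂ) + 1 by ring,
    Complex.Gamma_add_one _ hw, mul_assoc,
    show (1:ℂ) - Complex.I * (r:ℂ) = 1 - (Complex.I * (r:ℂ)) by ring,
    Complex.Gamma_mul_Gamma_one_sub]
  have hsin : Complex.sin (↑Real.pi * (Complex.I * (r:ℂ)))
      = ((Real.sinh (Real.pi * r) : ℝ) : ℂ) * Complex.I := by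
    rw [show (↑Real.pi * (Complex.I * (r:ℂ))) = ((Real.pi * r : ℝ):ℂ) * Complex.I by push_cast; ring,
      Complex.sin_mul_I, Complex.ofReal_sinh]
  rw [hsin]
  have hs : Real.sinh (Real.pi * r) ≠ 0 := by
    simp only [ne_eq, Real.sinh_eq_zero]
    exact mul_ne_zero Real.pi_ne_zero hr
  have hs' : ((Real.sinh (Real.pi * r) : ℝ) : ℂ) ≠ 0 := Complex.ofReal_ne_zero.mpr hs
  have hpi : ((Real.pi : ℝ) : ℂ) ≠ 0 := Complex.ofReal_ne_zero.mpr Real.pi_ne_zero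
  push_cast
  field_simp [Complex.I_ne_zero]

lemma integrable_exp_beta (s : ℝ) :
    Integrable (fun t : ℝ => Complex.exp (Complex.I * s * t) * ((betaD t : ℝ) : ℂ)) := by
  refine Integrable.mono' integrable_betaD ?_ ?_
  · apply Continuous.aestronglyMeasurable
    exact (Complex.continuous_exp.comp (by continuity)).mul
      (Complex.continuous_ofReal.comp continuous_betaD)
  · refine Filter.Eventually.of_forall (fun t => ?_)
    rw [norm_mul, Complex.norm_exp]
    have : (Complex.I * s * t).re = 0 := by simp
    rw [this, Real.exp_zero, one_mul, Complex.norm_real, Real.norm_eq_abs,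
      abs_of_pos (betaD_pos t)]

/-- `a^((1+It)/2) b^((1-It)/2) = c * exp(Ist)` -/
lemma cpow_pair (a b : ℝ) (ha : 0 < a) (hb : 0 < b) (t : ℝ) :
    (a:ℂ) ^ ((1 + Complex.I * t) / 2) * (b:ℂ) ^ ((1 - Complex.I * t) / 2)
      = ((Real.exp ((Real.log a + Real.log b) / 2) : ℝ) : ℂ) *
        Complex.exp (Complex.I * ((Real.log a - Real.log b) / 2 : ℝ) * t) := by
  have ha' : (a:ℂ) ≠ 0 := Complex.ofReal_ne_zero.mpr ha.ne'
  have hb' : (b:ℂ) ≠ 0 := Complex.ofReal_ne_zero.mpr hb.ne'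
  rw [Complex.cpow_def_of_ne_zero ha', Complex.cpow_def_of_ne_zero hb',
    ← Complex.ofReal_log ha.le, ← Complex.ofReal_log hb.le,
    ← Complex.exp_add, Complex.ofReal_exp, ← Complex.exp_add]
  congr 1
  push_cast
  ring


lemma rhs_deriv (A B x : ℝ) (hA : 0 < A) (hB : 0 < B) (hAB : A ≠ B) (hx : x ∈ Ici (0:ℝ)) :
    HasDerivAt (fun τ : ℝ => (Real.log (A + τ) - Real.log (B + τ)) / (B - A))
      (((A + x) * (B + x))⁻¹) x := by
  simp only [mem_Ici] at hx
  have hA' : A + x ≠ 0 := by positivity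
  have hB' : B + x ≠ 0 := by positivity
  have h1 : HasDerivAt (fun τ : ℝ => A + τ) 1 x := (hasDerivAt_id x).const_add A
  have h2 : HasDerivAt (fun τ : ℝ => B + τ) 1 x := (hasDerivAt_id x).const_add B
  have := ((h1.log hA').sub (h2.log hB')).div_const (B - A)
  refine this.congr_deriv ?_
  have hBA : B - A ≠ 0 := sub_ne_zero.mpr (Ne.symm hAB)
  field_simp
  ring

lemma rhs_tendsto (A B : ℝ) (hA : 0 < A) (hB : 0 < B) :
    Tendsto (fun τ : ℝ => (Real.log (A + τ) - Real.log (B + τ)) / (B - A)) atTop (nhds 0) := by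
  have h1 : Tendsto (fun τ : ℝ => (A + τ) / (B + τ)) atTop (nhds 1) := by
    have h0 : Tendsto (fun τ : ℝ => (A - B) / (B + τ)) atTop (nhds 0) := by
      simp_rw [div_eq_mul_inv]
      simpa using
        ((tendsto_inv_atTop_zero.comp (tendsto_atTop_add_const_left _ B tendsto_id)).const_mul (A - B))
    have h2 : Tendsto (fun τ : ℝ => 1 + (A - B) / (B + τ)) atTop (nhds 1) := by
      simpa using h0.const_add 1
    apply h2.congr'
    filter_upwards [eventually_gt_atTop (0:ℝ)] with x hx
    have hB' : B + x ≠ 0 := by positivity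
    field_simp
    ring
  have h3 : Tendsto (fun τ : ℝ => Real.log (A + τ) - Real.log (B + τ)) atTop (nhds 0) := by
    have h4 := (Real.continuousAt_log one_ne_zero).tendsto.comp h1
    rw [Real.log_one] at h4
    apply h4.congr'
    filter_upwards [eventually_gt_atTop (0:ℝ)] with x hx
    have hA' : A + x ≠ 0 := by positivity
    have hB' : B + x ≠ 0 := by positivity
    simp only [Function.comp_apply]
    rw [Real.log_div hA' hB']
  simpa using h3.div_const (B - A)

lemma rhs_nonneg (A B : ℝ) (hA : 0 < A) (hB : 0 < B) :
    ∀ x ∈ Ioi (0:ℝ), 0 ≤ ((A + x) * (B + x))⁻¹ := by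
  intro x hx
  simp only [mem_Ioi] at hx
  positivity

lemma rhs_integrable (A B : ℝ) (hA : 0 < A) (hB : 0 < B) :
    IntegrableOn (fun τ : ℝ => ((A + τ) * (B + τ))⁻¹) (Ioi (0:ℝ)) := by
  rcases eq_or_ne A B with rfl | hAB
  · have hderiv : ∀ x ∈ Ici (0:ℝ), HasDerivAt (fun τ : ℝ => -(A + τ)⁻¹) (((A + x) * (A + x))⁻¹) x := by
      intro x hx
      simp only [mem_Ici] at hx
      have hA' : A + x ≠ 0 := by positivity
      have := (((hasDerivAt_id x).const_add A).inv hA').neg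
      refine this.congr_deriv ?_
      simp only [id]
      field_simp
    have htend : Tendsto (fun τ : ℝ => -(A + τ)⁻¹) atTop (nhds 0) := by
      rw [show (0:ℝ) = -0 by ring]
      exact (tendsto_inv_atTop_zero.comp (tendsto_atTop_add_const_left _ A tendsto_id)).neg
    exact integrableOn_Ioi_deriv_of_nonneg' hderiv (rhs_nonneg A A hA hA) htend
  · exact integrableOn_Ioi_deriv_of_nonneg'
      (fun x hx => rhs_deriv A B x hA hB hAB hx) (rhs_nonneg A B hA hB) (rhs_tendsto A B hA hB)

lemma rhs_value_ne (A B : ℝ) (hA : 0 < A) (hB : 0 < B) (hAB : A ≠ B) :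
    ∫ τ in Ioi (0:ℝ), ((A + τ) * (B + τ))⁻¹ = (Real.log A - Real.log B) / (A - B) := by
  rw [integral_Ioi_of_hasDerivAt_of_nonneg'
    (fun x hx => rhs_deriv A B x hA hB hAB hx) (rhs_nonneg A B hA hB) (rhs_tendsto A B hA hB)]
  have hBA : B - A ≠ 0 := sub_ne_zero.mpr (Ne.symm hAB)
  have hAB' : A - B ≠ 0 := sub_ne_zero.mpr hAB
  simp only [add_zero]
  field_simp
  ring

lemma rhs_value_eq (A : ℝ) (hA : 0 < A) :
    ∫ τ in Ioi (0:ℝ), ((A + τ) * (A + τ))⁻¹ = A⁻¹ := by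
  have hderiv : ∀ x ∈ Ici (0:ℝ), HasDerivAt (fun τ : ℝ => -(A + τ)⁻¹) (((A + x) * (A + x))⁻¹) x := by
    intro x hx
    simp only [mem_Ici] at hx
    have hA' : A + x ≠ 0 := by positivity
    have := (((hasDerivAt_id x).const_add A).inv hA').neg
    refine this.congr_deriv ?_
    simp only [id]
    field_simp
  have htend : Tendsto (fun τ : ℝ => -(A + τ)⁻¹) atTop (nhds 0) := by
    rw [show (0:ℝ) = -0 by ring]
    exact (tendsto_inv_atTop_zero.comp (tendsto_atTop_add_const_left _ A tendsto_id)).neg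
  rw [integral_Ioi_of_hasDerivAt_of_nonneg' hderiv (rhs_nonneg A A hA hA) htend]
  simp


lemma key_real (L M : ℝ) (hLM : L ≠ M) :
    Real.exp ((L + M) / 2) * (((L - M) / 2) / Real.sinh ((L - M) / 2))
      = (Real.log (Real.exp L)⁻¹ - Real.log (Real.exp M)⁻¹)
          / ((Real.exp L)⁻¹ - (Real.exp M)⁻¹) := by
  have hs : (L - M) / 2 ≠ 0 := by
    intro h; apply hLM; linarith [(div_eq_zero_iff.mp h).resolve_right (by norm_num)]
  set s := (L - M) / 2 with hsdef
  set c := Real.exp ((L + M) / 2) with hcdef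
  have hc : 0 < c := Real.exp_pos _
  have hE : (0:ℝ) < Real.exp s := Real.exp_pos _
  have h1 : Real.exp L = c * Real.exp s := by
    rw [hcdef, ← Real.exp_add]; congr 1; rw [hsdef]; ring
  have h2 : Real.exp M = c * Real.exp (-s) := by
    rw [hcdef, ← Real.exp_add]; congr 1; rw [hsdef]; ring
  clear_value s c
  have hsinh : Real.sinh s ≠ 0 := by
    simpa [Real.sinh_eq_zero] using hs
  have hdiff : Real.exp s - Real.exp (-s) ≠ 0 := by
    have := Real.sinh_eq s; intro h; apply hsinh; rw [this, h]; norm_num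
  rw [Real.log_inv, Real.log_inv, Real.log_exp, Real.log_exp, h1, h2, Real.sinh_eq, Real.exp_neg]
  rw [Real.exp_neg] at hdiff
  have hE' : Real.exp s ≠ 0 := hE.ne'
  have hdiff' : (Real.exp s)⁻¹ - Real.exp s ≠ 0 := by
    intro h; apply hdiff; linarith
  have hden : (c * Real.exp s)⁻¹ - (c * (Real.exp s)⁻¹)⁻¹ = ((Real.exp s)⁻¹ - Real.exp s) / c := by
    field_simp
  rw [hden, show -L - -M = -(2*s) by rw [hsdef]; ring]
  have hinv : (-1 + Real.exp s ^ 2)⁻¹ = -((1 - Real.exp s ^ 2)⁻¹) := by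
    rw [← inv_neg]; ring_nf
  field_simp
  ring_nf
  rw [hinv]

lemma scalar_key (a b : ℝ) (ha : 0 < a) (hb : 0 < b) :
    (∫ t : ℝ, (a:ℂ) ^ ((1 + Complex.I * t) / 2) * (b:ℂ) ^ ((1 - Complex.I * t) / 2)
        * ((betaD t : ℝ) : ℂ))
      = ∫ τ in Set.Ioi (0:ℝ), (((a⁻¹ + τ : ℝ)) : ℂ)⁻¹ * (((b⁻¹ + τ : ℝ)) : ℂ)⁻¹ := by
  have hLa := Real.exp_log ha
  have hLb := Real.exp_log hb
  set L := Real.log a with hL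
  set M := Real.log b with hM
  have hlhs : (∫ t : ℝ, (a:ℂ) ^ ((1 + Complex.I * t) / 2) * (b:ℂ) ^ ((1 - Complex.I * t) / 2)
        * ((betaD t : ℝ) : ℂ))
      = ((Real.exp ((L + M) / 2) : ℝ) : ℂ) *
          ∫ t : ℝ, Complex.exp (Complex.I * (((L - M) / 2 : ℝ)) * t) * ((betaD t : ℝ) : ℂ) := by
    rw [← integral_const_mul]
    congr 1
    funext t
    rw [cpow_pair a b ha hb t]
    ring
  have hrhs : (∫ τ in Set.Ioi (0:ℝ), (((a⁻¹ + τ : ℝ)) : ℂ)⁻¹ * (((b⁻¹ + τ : ℝ)) : ℂ)⁻¹)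
      = (((∫ τ in Set.Ioi (0:ℝ), ((a⁻¹ + τ) * (b⁻¹ + τ))⁻¹) : ℝ) : ℂ) := by
    simp_rw [mul_inv]
    norm_cast
  rw [hlhs, hrhs, ← fourier_eq_mellin, mellin_eq_beta,
    show (((L - M) / 2) / Real.pi : ℝ) = ((L - M) / 2) / Real.pi from rfl, beta_gamma]
  rcases eq_or_ne a b with rfl | hab
  · have hs0 : ((L - M) / 2) / Real.pi = 0 := by rw [hL, hM]; simp
    rw [hs0]
    simp only [Complex.ofReal_zero, mul_zero, add_zero, sub_zero, Complex.Gamma_one, mul_one]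
    rw [rhs_value_eq a⁻¹ (inv_pos.mpr ha), inv_inv]
    rw [show (L + M)/2 = L by rw [hL, hM]; ring, hLa]
  · have hLM : L ≠ M := by
      intro h
      apply hab
      rw [← hLa, ← hLb, h]
    have hs : ((L - M) / 2) ≠ 0 := by
      intro h
      apply hLM
      have := div_eq_zero_iff.mp h
      rcases this with h' | h'
      · linarith
      · norm_num at h'
    have hr : ((L - M) / 2) / Real.pi ≠ 0 := div_ne_zero hs Real.pi_ne_zero
    rw [gamma_prod _ hr]
    have hπ : Real.pi * (((L - M) / 2) / Real.pi) = (L - M) / 2 := by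
      rw [mul_comm, div_mul_cancel₀ _ Real.pi_ne_zero]
    rw [hπ]
    have hAB : a⁻¹ ≠ b⁻¹ := fun h => hab (inv_injective h)
    rw [rhs_value_ne a⁻¹ b⁻¹ (inv_pos.mpr ha) (inv_pos.mpr hb) hAB]
    rw [← Complex.ofReal_mul]
    congr 1
    have := key_real L M hLM
    rw [hLa, hLb] at this
    rw [this]

lemma integrable_lhs (a b : ℝ) (ha : 0 < a) (hb : 0 < b) :
    Integrable (fun t : ℝ => (a:ℂ) ^ ((1 + Complex.I * t) / 2) * (b:ℂ) ^ ((1 - Complex.I * t) / 2)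
      * ((betaD t : ℝ) : ℂ)) := by
  have h := (integrable_exp_beta ((Real.log a - Real.log b) / 2)).const_mul
    ((Real.exp ((Real.log a + Real.log b) / 2) : ℝ) : ℂ)
  apply h.congr
  refine Filter.Eventually.of_forall (fun t => ?_)
  dsimp only
  rw [cpow_pair a b ha hb t]
  ring

lemma integrable_rhsC (a b : ℝ) (ha : 0 < a) (hb : 0 < b) :
    IntegrableOn (fun τ : ℝ => (((a⁻¹ + τ : ℝ)) : ℂ)⁻¹ * (((b⁻¹ + τ : ℝ)) : ℂ)⁻¹) (Ioi (0:ℝ)) := by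
  have h := (rhs_integrable a⁻¹ b⁻¹ (inv_pos.mpr ha) (inv_pos.mpr hb)).ofReal (𝕜 := ℂ)
  apply h.congr
  refine Filter.Eventually.of_forall (fun τ => ?_)
  dsimp only
  rw [mul_inv]
  norm_cast


end AuxBeta

open MeasureTheory Set Real Filter in
open ComplexOrder in
/-- `∫ A₂^{(1+it)/2} A₁ A₂^{(1-it)/2} β(t) dt = T_{A₂⁻¹}(A₁) = ∫₀^∞ (A₂⁻¹+τ)⁻¹ A₁ (A₂⁻¹+τ)⁻¹ dτ`. -/
theorem beta_average_eq_T {d : ℕ} (A₁ A₂ : Matrix (Fin d) (Fin d) ℂ)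
    (h₁ : A₁.PosDef) (h₂ : A₂.PosDef) :
    (Matrix.of fun i j =>
        ∫ t : ℝ,
          (mcpow A₂ ((1 + Complex.I * t) / 2) * A₁ * mcpow A₂ ((1 - Complex.I * t) / 2)) i j *
            (betaD t : ℂ)) =
      Tmap A₂⁻¹ A₁ := by
  classical
  have h : A₂.IsHermitian := h₂.1
  set U : Matrix (Fin d) (Fin d) ℂ := (h.eigenvectorUnitary : Matrix (Fin d) (Fin d) ℂ) with hUdef
  have hU1 : U * star U = 1 := (Matrix.mem_unitaryGroup_iff).mp h.eigenvectorUnitary.2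
  have hU2 : star U * U = 1 := (Matrix.mem_unitaryGroup_iff').mp h.eigenvectorUnitary.2
  set lam : Fin d → ℝ := h.eigenvalues with hlamdef
  have hlam : ∀ k, 0 < lam k := fun k => h₂.eigenvalues_pos k
  set Mx : Matrix (Fin d) (Fin d) ℂ := star U * A₁ * U with hMx
  -- conjugation product
  have conj_mul : ∀ D D' : Matrix (Fin d) (Fin d) ℂ,
      (U * D * star U) * (U * D' * star U) = U * (D * D') * star U := by
    intro D D'
    calc (U * D * star U) * (U * D' * star U)
        = U * (D * ((star U * U) * (D' * star U))) := by simp only [Matrix.mul_assoc]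
      _ = U * (D * D') * star U := by rw [hU2, Matrix.one_mul]; simp only [Matrix.mul_assoc]
  -- sandwich
  have sandwich : ∀ f g : Fin d → ℂ,
      (U * Matrix.diagonal f * star U) * A₁ * (U * Matrix.diagonal g * star U)
        = U * (Matrix.diagonal f * Mx * Matrix.diagonal g) * star U := by
    intro f g
    rw [hMx]
    simp only [Matrix.mul_assoc]
  -- entries
  have entryD : ∀ (f g : Fin d → ℂ) (i j : Fin d),
      (U * (Matrix.diagonal f * Mx * Matrix.diagonal g) * star U) i j
        = ∑ l, ∑ k, (U i k * (starRingEnd ℂ) (U j l) * Mx k l) * (f k * g l) := by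
    intro f g i j
    have hN : ∀ k x, (Matrix.diagonal f * Mx * Matrix.diagonal g) k x = f k * Mx k x * g x :=
      fun k x => by rw [Matrix.mul_diagonal, Matrix.diagonal_mul]
    rw [Matrix.mul_apply]
    refine Finset.sum_congr rfl fun l _ => ?_
    rw [Matrix.mul_apply, Finset.sum_mul]
    refine Finset.sum_congr rfl fun k _ => ?_
    rw [hN, Matrix.star_apply]
    rw [show star (U j l) = (starRingEnd ℂ) (U j l) from rfl]
    ring
  -- mcpow
  have hmc : ∀ z : ℂ, mcpow A₂ z = U * Matrix.diagonal (fun k => (lam k : ℂ) ^ z) * star U := by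
    intro z
    simp only [mcpow, dif_pos h]
    rfl
  -- inverse of conjugated diagonal
  have hinv : ∀ f : Fin d → ℂ, (∀ k, f k ≠ 0) →
      (U * Matrix.diagonal f * star U)⁻¹ = U * Matrix.diagonal (fun k => (f k)⁻¹) * star U := by
    intro f hf
    apply Matrix.inv_eq_right_inv
    rw [conj_mul, Matrix.diagonal_mul_diagonal]
    have : (fun k => f k * (f k)⁻¹) = fun _ => (1:ℂ) := funext fun k => mul_inv_cancel₀ (hf k)
    rw [this, Matrix.diagonal_one, Matrix.mul_one, hU1]
  -- spectral theorem
  have hspec : A₂ = U * Matrix.diagonal (fun k => (lam k : ℂ)) * star U := by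
    have hs := h.spectral_theorem
    convert hs using 2
    rfl
  -- A₂⁻¹
  have hA2inv : A₂⁻¹ = U * Matrix.diagonal (fun k => (((lam k)⁻¹ : ℝ) : ℂ)) * star U := by
    have hfe : (fun k => (((lam k)⁻¹ : ℝ) : ℂ)) = fun k => ((lam k : ℂ))⁻¹ :=
      funext fun k => Complex.ofReal_inv (lam k)
    rw [hspec, hfe]
    exact hinv _ (fun k => Complex.ofReal_ne_zero.mpr (hlam k).ne')
  -- resolvent
  have hres : ∀ τ : ℝ, τ ∈ Ioi (0:ℝ) →
      (A₂⁻¹ + (τ:ℂ) • 1)⁻¹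
        = U * Matrix.diagonal (fun k => ((((lam k)⁻¹ + τ : ℝ)) : ℂ)⁻¹) * star U := by
    intro τ hτ
    simp only [mem_Ioi] at hτ
    have hid : (τ:ℂ) • (1 : Matrix (Fin d) (Fin d) ℂ)
        = U * Matrix.diagonal (fun _ => (τ:ℂ)) * star U := by
      rw [← Matrix.smul_one_eq_diagonal, Matrix.mul_smul, Matrix.mul_one, Matrix.smul_mul, hU1]
    have hsum : A₂⁻¹ + (τ:ℂ) • 1
        = U * Matrix.diagonal (fun k => ((((lam k)⁻¹ + τ : ℝ)) : ℂ)) * star U := by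
      have hfe : (fun k => ((((lam k)⁻¹ + τ : ℝ)) : ℂ))
          = fun k => (((lam k)⁻¹ : ℝ) : ℂ) + (τ:ℂ) :=
        funext fun k => Complex.ofReal_add _ _
      rw [hA2inv, hid, ← Matrix.add_mul, ← Matrix.mul_add, Matrix.diagonal_add, hfe]
    rw [hsum, hinv _ (fun k => Complex.ofReal_ne_zero.mpr
      (add_pos_of_nonneg_of_pos (inv_nonneg.mpr (hlam k).le) hτ).ne')]
  -- entrywise
  ext i j
  simp only [Matrix.of_apply, Tmap]
  -- LHS rewriting
  have hLHSfun : ∀ t : ℝ,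
      (mcpow A₂ ((1 + Complex.I * t) / 2) * A₁ * mcpow A₂ ((1 - Complex.I * t) / 2)) i j
          * ((betaD t : ℝ) : ℂ)
        = ∑ l, ∑ k, (U i k * (starRingEnd ℂ) (U j l) * Mx k l) *
            ((lam k : ℂ) ^ ((1 + Complex.I * t) / 2) * (lam l : ℂ) ^ ((1 - Complex.I * t) / 2)
              * ((betaD t : ℝ) : ℂ)) := by
    intro t
    rw [hmc, hmc, sandwich, entryD, Finset.sum_mul]
    refine Finset.sum_congr rfl fun l _ => ?_
    rw [Finset.sum_mul]
    refine Finset.sum_congr rfl fun k _ => ?_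
    ring
  have hRHSfun : ∀ τ ∈ Ioi (0:ℝ),
      ((A₂⁻¹ + (τ:ℂ) • 1)⁻¹ * A₁ * (A₂⁻¹ + (τ:ℂ) • 1)⁻¹) i j
        = ∑ l, ∑ k, (U i k * (starRingEnd ℂ) (U j l) * Mx k l) *
            (((((lam k)⁻¹ + τ : ℝ)) : ℂ)⁻¹ * ((((lam l)⁻¹ + τ : ℝ)) : ℂ)⁻¹) := by
    intro τ hτ
    rw [hres τ hτ, sandwich, entryD]
  calc (∫ t : ℝ, (mcpow A₂ ((1 + Complex.I * t) / 2) * A₁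
          * mcpow A₂ ((1 - Complex.I * t) / 2)) i j * ((betaD t : ℝ) : ℂ))
      = ∫ t : ℝ, ∑ l, ∑ k, (U i k * (starRingEnd ℂ) (U j l) * Mx k l) *
            ((lam k : ℂ) ^ ((1 + Complex.I * t) / 2) * (lam l : ℂ) ^ ((1 - Complex.I * t) / 2)
              * ((betaD t : ℝ) : ℂ)) := by
        congr 1
        funext t
        exact hLHSfun t
    _ = ∑ l, ∑ k, (U i k * (starRingEnd ℂ) (U j l) * Mx k l) *
            ∫ t : ℝ, ((lam k : ℂ) ^ ((1 + Complex.I * t) / 2)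
              * (lam l : ℂ) ^ ((1 - Complex.I * t) / 2) * ((betaD t : ℝ) : ℂ)) := by
        rw [integral_finset_sum Finset.univ (fun l _ =>
          integrable_finset_sum Finset.univ (fun k _ =>
            (integrable_lhs (lam k) (lam l) (hlam k) (hlam l)).const_mul _))]
        refine Finset.sum_congr rfl fun l _ => ?_
        rw [integral_finset_sum Finset.univ (fun k _ =>
          (integrable_lhs (lam k) (lam l) (hlam k) (hlam l)).const_mul _)]
        refine Finset.sum_congr rfl fun k _ => ?_
        rw [integral_const_mul]
    _ = ∑ l, ∑ k, (U i k * (starRingEnd ℂ) (U j l) * Mx k l) *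
            ∫ τ in Ioi (0:ℝ), ((((lam k)⁻¹ + τ : ℝ) : ℂ))⁻¹ * ((((lam l)⁻¹ + τ : ℝ) : ℂ))⁻¹ := by
        refine Finset.sum_congr rfl fun l _ => Finset.sum_congr rfl fun k _ => ?_
        rw [scalar_key (lam k) (lam l) (hlam k) (hlam l)]
    _ = ∫ τ in Ioi (0:ℝ), ∑ l, ∑ k, (U i k * (starRingEnd ℂ) (U j l) * Mx k l) *
            (((((lam k)⁻¹ + τ : ℝ)) : ℂ)⁻¹ * ((((lam l)⁻¹ + τ : ℝ)) : ℂ)⁻¹) := by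
        rw [integral_finset_sum Finset.univ (fun l _ =>
          integrable_finset_sum Finset.univ (fun k _ =>
            (integrable_rhsC (lam k) (lam l) (hlam k) (hlam l)).const_mul _))]
        refine Finset.sum_congr rfl fun l _ => ?_
        rw [integral_finset_sum Finset.univ (fun k _ =>
          (integrable_rhsC (lam k) (lam l) (hlam k) (hlam l)).const_mul _)]
        refine Finset.sum_congr rfl fun k _ => ?_
        rw [integral_const_mul]
    _ = ∫ τ in Ioi (0:ℝ), ((A₂⁻¹ + (τ:ℂ) • 1)⁻¹ * A₁ * (A₂⁻¹ + (τ:ℂ) • 1)⁻¹) i j := by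
        refine setIntegral_congr_fun measurableSet_Ioi (fun τ hτ => ?_)
        exact (hRHSfun τ hτ).symm

end
end

section
/- Let A be a self-adjoint complex m×m matrix and let P be an orthogonal projection on ℂ^m with ker P = span{v} for a unit vector v. Then lim_{t→∞} Tr[exp(A − tP)] = exp(⟨v, Av⟩). -/
open MeasureTheory
open scoped Kronecker

noncomputable section

section AuxLemmasForMainProof

open Matrix

variable {m : ℕ}

lemma star_mul_self_eigU {H : Matrix (Fin m) (Fin m) ℂ} (h : H.IsHermitian) :
    star (h.eigenvectorUnitary : Matrix (Fin m) (Fin m) ℂ) * (h.eigenvectorUnitary : Matrix (Fin m) (Fin m) ℂ) = 1 :=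
  Unitary.coe_star_mul_self h.eigenvectorUnitary

lemma mul_star_self_eigU {H : Matrix (Fin m) (Fin m) ℂ} (h : H.IsHermitian) :
    (h.eigenvectorUnitary : Matrix (Fin m) (Fin m) ℂ) * star (h.eigenvectorUnitary : Matrix (Fin m) (Fin m) ℂ) = 1 :=
  Unitary.coe_mul_star_self h.eigenvectorUnitary

lemma trace_mexp {H : Matrix (Fin m) (Fin m) ℂ} (h : H.IsHermitian) :
    (mexp H).trace = ∑ k, Complex.exp (h.eigenvalues k) := by
  set U : Matrix (Fin m) (Fin m) ℂ := (h.eigenvectorUnitary : Matrix (Fin m) (Fin m) ℂ) with hU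
  have hU1 : star U * U = 1 := star_mul_self_eigU h
  have hU2 : U * star U = 1 := mul_star_self_eigU h
  have hUinv : U⁻¹ = star U := Matrix.inv_eq_left_inv hU1
  have hUnit : IsUnit U := ⟨⟨U, star U, hU2, hU1⟩, rfl⟩
  have hspec := h.spectral_theorem
  have hspec' : H = U * diagonal (RCLike.ofReal ∘ h.eigenvalues) * U⁻¹ := by
    rw [hUinv]; exact hspec
  have hexp : NormedSpace.exp H = U * NormedSpace.exp (diagonal (RCLike.ofReal ∘ h.eigenvalues)) * U⁻¹ := by
    conv_lhs => rw [hspec']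
    exact Matrix.exp_conj _ _ hUnit
  rw [mexp, hexp, Matrix.exp_diagonal]
  rw [trace_mul_comm, ← mul_assoc, hUinv, hU1, one_mul, trace_diagonal]
  congr 1
  ext k
  rw [Pi.exp_def]
  simp only [Function.comp]
  rw [← Complex.exp_eq_exp_ℂ]
  rfl

lemma trace_herm {H : Matrix (Fin m) (Fin m) ℂ} (h : H.IsHermitian) :
    H.trace = ∑ k, (h.eigenvalues k : ℂ) := by
  set U : Matrix (Fin m) (Fin m) ℂ := (h.eigenvectorUnitary : Matrix (Fin m) (Fin m) ℂ) with hU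
  have hU1 : star U * U = 1 := star_mul_self_eigU h
  conv_lhs => rw [h.spectral_theorem, Unitary.conjStarAlgAut_apply]
  rw [trace_mul_comm, ← mul_assoc, hU1, one_mul, trace_diagonal]
  rfl

lemma col_eig {H : Matrix (Fin m) (Fin m) ℂ} (h : H.IsHermitian) (k : Fin m) :
    H *ᵥ (fun i => (h.eigenvectorUnitary : Matrix (Fin m) (Fin m) ℂ) i k)
      = (h.eigenvalues k : ℂ) • (fun i => (h.eigenvectorUnitary : Matrix (Fin m) (Fin m) ℂ) i k) := by
  set U : Matrix (Fin m) (Fin m) ℂ := (h.eigenvectorUnitary : Matrix (Fin m) (Fin m) ℂ) with hU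
  have hU1 : star U * U = 1 := star_mul_self_eigU h
  have hHU : H * U = U * diagonal (RCLike.ofReal ∘ h.eigenvalues) := by
    conv_lhs => rw [h.spectral_theorem, Unitary.conjStarAlgAut_apply]
    rw [mul_assoc, hU1, mul_one]
  funext i
  have := congrFun (congrFun hHU i) k
  simp only [Matrix.mul_apply, Matrix.diagonal, Matrix.of_apply] at this
  simp only [Matrix.mulVec, dotProduct, Pi.smul_apply, smul_eq_mul]
  rw [this]
  simp [Finset.sum_ite_eq, Function.comp]
  ring_nf

lemma col_norm {H : Matrix (Fin m) (Fin m) ℂ} (h : H.IsHermitian) (k : Fin m) :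
    star (fun i => (h.eigenvectorUnitary : Matrix (Fin m) (Fin m) ℂ) i k)
      ⬝ᵥ (fun i => (h.eigenvectorUnitary : Matrix (Fin m) (Fin m) ℂ) i k) = 1 := by
  set U : Matrix (Fin m) (Fin m) ℂ := (h.eigenvectorUnitary : Matrix (Fin m) (Fin m) ℂ) with hU
  have hU1 : star U * U = 1 := star_mul_self_eigU h
  have := congrFun (congrFun hU1 k) k
  simp only [Matrix.mul_apply, Matrix.one_apply_eq] at this
  simpa [dotProduct, Matrix.star_apply] using this

lemma weights_sum {H : Matrix (Fin m) (Fin m) ℂ} (h : H.IsHermitian) (v : Fin m → ℂ)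
    (hv : star v ⬝ᵥ v = 1) :
    ((∑ k, Complex.normSq ((star (h.eigenvectorUnitary : Matrix (Fin m) (Fin m) ℂ) *ᵥ v) k) : ℝ) : ℂ) = 1 ∧
    star v ⬝ᵥ H *ᵥ v =
      ((∑ k, h.eigenvalues k * Complex.normSq ((star (h.eigenvectorUnitary : Matrix (Fin m) (Fin m) ℂ) *ᵥ v) k) : ℝ) : ℂ) := by
  set U : Matrix (Fin m) (Fin m) ℂ := (h.eigenvectorUnitary : Matrix (Fin m) (Fin m) ℂ) with hU
  have hU1 : star U * U = 1 := star_mul_self_eigU h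
  have hU2 : U * star U = 1 := mul_star_self_eigU h
  set c : Fin m → ℂ := star U *ᵥ v with hc
  have hstarc : star c = star v ᵥ* U := by
    rw [hc, Matrix.star_mulVec, Matrix.star_eq_conjTranspose, Matrix.conjTranspose_conjTranspose]
  constructor
  · have h1 : star c ⬝ᵥ c = 1 := by
      rw [hstarc, ← Matrix.dotProduct_mulVec, Matrix.mulVec_mulVec, hU2, Matrix.one_mulVec, hv]
    rw [← h1]
    simp [dotProduct, Complex.normSq_eq_conj_mul_self]
  · have h2 : star v ⬝ᵥ H *ᵥ v = star c ⬝ᵥ (diagonal (RCLike.ofReal ∘ h.eigenvalues)) *ᵥ c := by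
      conv_lhs => rw [h.spectral_theorem, Unitary.conjStarAlgAut_apply]
      rw [← Matrix.mulVec_mulVec, ← Matrix.mulVec_mulVec, Matrix.dotProduct_mulVec, ← hstarc]
    rw [h2]
    push_cast
    simp [dotProduct, Matrix.mulVec_diagonal, Complex.normSq_eq_conj_mul_self, Function.comp]
    congr 1
    funext k
    ring_nf

lemma proj_formula (P : Matrix (Fin m) (Fin m) ℂ) (hP : P.IsHermitian) (hP2 : P * P = P)
    (v : Fin m → ℂ) (hv : star v ⬝ᵥ v = 1)
    (hker : ∀ w : Fin m → ℂ, P.mulVec w = 0 ↔ ∃ c : ℂ, w = c • v) :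
    ∀ w : Fin m → ℂ, P *ᵥ w = w - (star v ⬝ᵥ w) • v := by
  have hPv : P *ᵥ v = 0 := (hker v).mpr ⟨1, (one_smul _ _).symm⟩
  have hvP : star v ᵥ* P = 0 := by
    have := congrArg star hPv
    rw [Matrix.star_mulVec, hP.eq] at this
    simpa using this
  intro w
  have h1 : P *ᵥ (w - P *ᵥ w) = 0 := by
    rw [Matrix.mulVec_sub, Matrix.mulVec_mulVec, hP2, sub_self]
  obtain ⟨c, hc⟩ := (hker _).mp h1
  have h2 : star v ⬝ᵥ (w - P *ᵥ w) = c := by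
    rw [hc]
    rw [dotProduct_smul, hv, smul_eq_mul, mul_one]
  rw [dotProduct_sub, Matrix.dotProduct_mulVec, hvP, zero_dotProduct, sub_zero] at h2
  have h3 : P *ᵥ w = w - c • v := by
    rw [← hc]; abel
  rw [h3, h2]

lemma dotBound (A : Matrix (Fin m) (Fin m) ℂ) (x y : Fin m → ℂ) (bx c : ℝ)
    (hbx : 0 ≤ bx) (hc : 0 ≤ c)
    (hx : ∀ i, ‖x i‖ ≤ bx) (hy : ∀ i, ‖y i‖ ≤ c) :
    ‖star x ⬝ᵥ A.mulVec y‖ ≤ (∑ i, ∑ j, ‖A i j‖) * (bx * c) := by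
  have h1 : star x ⬝ᵥ A.mulVec y = ∑ i, ∑ j, star (x i) * (A i j * y j) := by
    simp [dotProduct, Matrix.mulVec, Finset.mul_sum]
  rw [h1, Finset.sum_mul]
  refine (norm_sum_le _ _).trans (Finset.sum_le_sum fun i _ => ?_)
  rw [Finset.sum_mul]
  refine (norm_sum_le _ _).trans (Finset.sum_le_sum fun j _ => ?_)
  rw [norm_mul, norm_mul, norm_star]
  calc ‖x i‖ * (‖A i j‖ * ‖y j‖) ≤ bx * (‖A i j‖ * c) := by
        gcongr; exacts [hx i, hy j]
    _ = ‖A i j‖ * (bx * c) := by ring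

lemma entryBound (x : Fin m → ℂ) (s : ℝ) (h : ∑ i, Complex.normSq (x i) = s) (i : Fin m) :
    ‖x i‖ ≤ Real.sqrt s := by
  have h1 : Complex.normSq (x i) ≤ s := by
    rw [← h]
    exact Finset.single_le_sum (fun j _ => Complex.normSq_nonneg (x j)) (Finset.mem_univ i)
  have h2 : ‖x i‖ = Real.sqrt (Complex.normSq (x i)) := by
    rw [Complex.norm_def]
  rw [h2]
  exact Real.sqrt_le_sqrt h1

lemma sum_normSq_of_unit (x : Fin m → ℂ) (hx : star x ⬝ᵥ x = 1) :
    ∑ i, Complex.normSq (x i) = 1 := by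
  have h : ((∑ i, Complex.normSq (x i) : ℝ) : ℂ) = 1 := by
    rw [← hx]
    simp [dotProduct, Complex.normSq_eq_conj_mul_self]
  exact_mod_cast h

lemma cs_bound (C t s p : ℝ) (ht : 0 < t) (hss : s * s = p) :
    C * s - t * p ≤ C ^ 2 / (4 * t) := by
  have hp' : t ^ 2 * p = t ^ 2 * (s * s) := by rw [hss]
  rw [le_div_iff₀ (by positivity : (0:ℝ) < 4 * t)]
  nlinarith [sq_nonneg (C - 2 * t * s), hp']

lemma rayleigh_bound (A P : Matrix (Fin m) (Fin m) ℂ) (hP : P.IsHermitian)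
    (hP2 : P * P = P) (v : Fin m → ℂ) (hv : star v ⬝ᵥ v = 1)
    (hPw : ∀ w : Fin m → ℂ, P *ᵥ w = w - (star v ⬝ᵥ w) • v)
    (a K : ℝ) (ha : star v ⬝ᵥ A *ᵥ v = (a : ℂ)) (hK : K = ∑ i, ∑ j, ‖A i j‖)
    (t : ℝ) (ht : 1 ≤ t) (u : Fin m → ℂ) (hu : star u ⬝ᵥ u = 1)
    (μ : ℝ) (hμ : star u ⬝ᵥ (A - (t : ℂ) • P) *ᵥ u = (μ : ℂ)) :
    μ ≤ a + (|a| + 3 * K) ^ 2 / (4 * t) ∧ -K - t ≤ μ := by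
  have hK0 : 0 ≤ K := by
    rw [hK]
    positivity
  set w : ℂ := star v ⬝ᵥ u with hw
  set r : Fin m → ℂ := P *ᵥ u with hrdef
  have hr : r = u - w • v := hPw u
  have hcw : star u ⬝ᵥ v = (starRingEnd ℂ) w := by
    rw [Matrix.star_dotProduct]; rfl
  set p : ℝ := 1 - Complex.normSq w with hpdef
  have hπ : star u ⬝ᵥ P *ᵥ u = ((p : ℝ) : ℂ) := by
    rw [show P *ᵥ u = u - w • v from hPw u, dotProduct_sub, hu, dotProduct_smul, smul_eq_mul,
      hcw, Complex.mul_conj, hpdef]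
    push_cast
    ring
  have hp_eq : ∑ j, Complex.normSq (r j) = p := by
    have h1 : star r ⬝ᵥ r = ((p : ℝ) : ℂ) := by
      have hsr : star r = star u ᵥ* P := by
        rw [hrdef, Matrix.star_mulVec, hP.eq]
      rw [hsr, hrdef, ← Matrix.dotProduct_mulVec, Matrix.mulVec_mulVec, hP2, hπ]
    have h2 : ((∑ j, Complex.normSq (r j) : ℝ) : ℂ) = ((p : ℝ) : ℂ) := by
      rw [← h1]
      simp [dotProduct, Complex.normSq_eq_conj_mul_self]
    exact_mod_cast h2
  have hp0 : 0 ≤ p := by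
    rw [← hp_eq]
    exact Finset.sum_nonneg fun j _ => Complex.normSq_nonneg _
  have hp1 : p ≤ 1 := by
    have := Complex.normSq_nonneg w
    rw [hpdef]; linarith
  have hw1 : ‖w‖ ≤ 1 := by
    have h1 : ‖w‖ ^ 2 = Complex.normSq w := Complex.sq_norm w
    nlinarith [norm_nonneg w]
  have hvE : ∀ i, ‖v i‖ ≤ 1 := by
    intro i
    have := entryBound v 1 (sum_normSq_of_unit v hv) i
    rwa [Real.sqrt_one] at this
  have huE : ∀ i, ‖u i‖ ≤ 1 := by
    intro i
    have := entryBound u 1 (sum_normSq_of_unit u hu) i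
    rwa [Real.sqrt_one] at this
  have hrE : ∀ i, ‖r i‖ ≤ Real.sqrt p := entryBound r p hp_eq
  set s : ℝ := Real.sqrt p with hs
  have hs0 : 0 ≤ s := Real.sqrt_nonneg p
  have hs1 : s ≤ 1 := Real.sqrt_le_one.mpr hp1
  have hss : s * s = p := Real.mul_self_sqrt hp0
  set α : ℂ := star u ⬝ᵥ A *ᵥ u with hα
  have hμα : α = ((μ + t * p : ℝ) : ℂ) := by
    have h1 : star u ⬝ᵥ (A - (t : ℂ) • P) *ᵥ u = α - (t : ℂ) * ((p : ℝ) : ℂ) := by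
      rw [Matrix.sub_mulVec, dotProduct_sub, Matrix.smul_mulVec, dotProduct_smul,
        smul_eq_mul, hπ, hα]
    rw [h1] at hμ
    have : α = (μ : ℂ) + (t : ℂ) * ((p : ℝ) : ℂ) := by linear_combination hμ
    rw [this]; push_cast; ring
  have hαre : α.re = μ + t * p := by rw [hμα]; simp
  -- decompose α
  have hu_eq : u = w • v + r := by rw [hr]; abel
  have hexp : α = (starRingEnd ℂ) w * (w * (star v ⬝ᵥ A *ᵥ v)) +
      ((starRingEnd ℂ) w * (star v ⬝ᵥ A *ᵥ r) + (w * (star r ⬝ᵥ A *ᵥ v) +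
      star r ⬝ᵥ A *ᵥ r)) := by
    rw [hα]
    conv_lhs => rw [hu_eq]
    simp only [Matrix.mulVec_add, Matrix.mulVec_smul, star_add, star_smul, add_dotProduct,
      dotProduct_add, smul_dotProduct, dotProduct_smul, smul_eq_mul, Complex.star_def]
    ring
  have hX2 : ‖star v ⬝ᵥ A *ᵥ r‖ ≤ K * (1 * s) := by
    rw [hK]; exact dotBound A v r 1 s zero_le_one hs0 hvE hrE
  have hX3 : ‖star r ⬝ᵥ A *ᵥ v‖ ≤ K * (s * 1) := by
    rw [hK]; exact dotBound A r v s 1 hs0 zero_le_one hrE hvE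
  have hX4 : ‖star r ⬝ᵥ A *ᵥ r‖ ≤ K * (s * s) := by
    rw [hK]; exact dotBound A r r s s hs0 hs0 hrE hrE
  have hXu : ‖α‖ ≤ K * (1 * 1) := by
    rw [hα, hK]; exact dotBound A u u 1 1 zero_le_one zero_le_one huE huE
  have hterm1 : ((starRingEnd ℂ) w * (w * (star v ⬝ᵥ A *ᵥ v))).re = (1 - p) * a := by
    rw [ha, ← mul_assoc, mul_comm ((starRingEnd ℂ) w) w, Complex.mul_conj,
      ← Complex.ofReal_mul, Complex.ofReal_re, hpdef]
    ring
  have hre_le : α.re ≤ (1 - p) * a + (1 * (K * (1 * s)) + (1 * (K * (s * 1)) + K * (s * s))) := by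
    rw [hexp]
    rw [Complex.add_re]
    gcongr
    · exact le_of_eq hterm1
    · calc ((starRingEnd ℂ) w * (star v ⬝ᵥ A *ᵥ r) + (w * (star r ⬝ᵥ A *ᵥ v) + star r ⬝ᵥ A *ᵥ r)).re
          ≤ ‖(starRingEnd ℂ) w * (star v ⬝ᵥ A *ᵥ r) + (w * (star r ⬝ᵥ A *ᵥ v) + star r ⬝ᵥ A *ᵥ r)‖ :=
            Complex.re_le_norm _
        _ ≤ ‖(starRingEnd ℂ) w * (star v ⬝ᵥ A *ᵥ r)‖ + (‖w * (star r ⬝ᵥ A *ᵥ v)‖ + ‖star r ⬝ᵥ A *ᵥ r‖) :=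
            (norm_add_le _ _).trans (by gcongr; exact norm_add_le _ _)
        _ ≤ 1 * (K * (1 * s)) + (1 * (K * (s * 1)) + K * (s * s)) := by
            rw [norm_mul, norm_mul, RCLike.norm_conj]
            gcongr
  clear_value w r p s α
  have ht0 : (0:ℝ) < t := by linarith
  have hps : p ≤ s := by nlinarith
  constructor
  · have h0 : 0 ≤ p * (|a| + a) := mul_nonneg hp0 (by linarith [neg_abs_le a])
    have h1 : (1 - p) * a ≤ a + |a| * s := by
      nlinarith [mul_le_mul_of_nonneg_right hps (abs_nonneg a)]
    have hC : μ ≤ a + (|a| + 3 * K) * s - t * p := by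
      nlinarith [mul_le_mul_of_nonneg_left hps hK0]
    have h2 := cs_bound (|a| + 3 * K) t s p ht0 hss
    linarith
  · have h2 : |α.re| ≤ ‖α‖ := by
      exact Complex.abs_re_le_norm α
    have h3 : t * p ≤ t * 1 := mul_le_mul_of_nonneg_left hp1 (le_of_lt ht0)
    have h4 := neg_abs_le α.re
    rw [mul_one] at h3
    linarith


end AuxLemmasForMainProof

open Matrix in
/-- If `P` is an orthogonal projection with one-dimensional kernel spanned by the unit vector
`v`, then `Tr[exp(A − tP)] → exp⟨v, Av⟩` as `t → ∞`. -/
theorem trace_exp_sub_proj_tendsto {m : ℕ} (A P : Matrix (Fin m) (Fin m) ℂ)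
    (hA : A.IsHermitian) (hP : P.IsHermitian) (hP2 : P * P = P)
    (v : Fin m → ℂ) (hv : star v ⬝ᵥ v = 1)
    (hker : ∀ w : Fin m → ℂ, P.mulVec w = 0 ↔ ∃ c : ℂ, w = c • v) :
    Filter.Tendsto (fun t : ℝ => Matrix.trace (mexp (A - (t : ℂ) • P)))
      Filter.atTop (nhds (Complex.exp (star v ⬝ᵥ A.mulVec v))) := by
  classical
  have hm : 0 < m := by
    by_contra h
    push_neg at h
    interval_cases m
    simp [dotProduct] at hv
  -- the Rayleigh quotient of v is real
  have hreal : star v ⬝ᵥ A *ᵥ v = star (star v ⬝ᵥ A *ᵥ v) := by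
    conv_lhs => rw [Matrix.dotProduct_mulVec, ← hA.eq, ← Matrix.star_mulVec]
    rw [Matrix.star_dotProduct]
  set a : ℝ := (star v ⬝ᵥ A *ᵥ v).re with ha_def
  have ha : star v ⬝ᵥ A *ᵥ v = (a : ℂ) := by
    have := Complex.conj_eq_iff_re.mp (by rw [← Complex.star_def]; exact hreal.symm)
    exact this.symm
  set K : ℝ := ∑ i, ∑ j, ‖A i j‖ with hK_def
  have hK0 : 0 ≤ K := by rw [hK_def]; positivity
  have hPw := proj_formula P hP hP2 v hv hker
  have hPv0 : P *ᵥ v = 0 := (hker v).mpr ⟨1, (one_smul _ _).symm⟩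
  have hherm : ∀ t : ℝ, (A - (t : ℂ) • P).IsHermitian := by
    intro t
    refine hA.sub ?_
    unfold Matrix.IsHermitian
    rw [Matrix.conjTranspose_smul, hP.eq, Complex.star_def, Complex.conj_ofReal]
  have htr : ∀ t : ℝ, (mexp (A - (t : ℂ) • P)).trace
      = ((∑ k, Real.exp ((hherm t).eigenvalues k) : ℝ) : ℂ) := by
    intro t
    rw [trace_mexp (hherm t)]
    push_cast [Complex.ofReal_exp]
    rfl
  -- trace of P
  have hPtr : P.trace = (m : ℂ) - 1 := by
    have hPij : ∀ i j, P i j = (if i = j then (1:ℂ) else 0) - star (v j) * v i := by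
      intro i j
      have h1 := congrFun (hPw (Pi.single j 1)) i
      simpa [Matrix.mulVec_single, Pi.single_apply, dotProduct, Finset.sum_ite_eq,
        eq_comm] using h1
    have : P.trace = ∑ i, ((if i = i then (1:ℂ) else 0) - star (v i) * v i) := by
      rw [Matrix.trace]
      exact Finset.sum_congr rfl fun i _ => by rw [Matrix.diag_apply, hPij i i]
    rw [this]
    simp only [if_pos rfl]
    rw [Finset.sum_sub_distrib]
    have : ∑ i, star (v i) * v i = star v ⬝ᵥ v := rfl
    rw [this, hv]
    simp
  set C : ℝ := |a| + 3 * K with hC_def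
  set D : ℝ := (A.trace).re - a + m * K with hD_def
  -- per t facts
  have hfacts : ∀ t : ℝ, 1 ≤ t →
      (Real.exp a ≤ ∑ k, Real.exp ((hherm t).eigenvalues k)) ∧
      (∑ k, Real.exp ((hherm t).eigenvalues k)
        ≤ Real.exp (a + C ^ 2 / (4 * t)) + m * Real.exp (D - t)) := by
    intro t ht
    set h := hherm t
    set μ : Fin m → ℝ := h.eigenvalues with hμ_def
    set U : Matrix (Fin m) (Fin m) ℂ := (h.eigenvectorUnitary : Matrix (Fin m) (Fin m) ℂ) with hU_def
    -- Rayleigh identity for eigenvector columns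
    have hμray : ∀ k, star (fun i => U i k) ⬝ᵥ (A - (t : ℂ) • P) *ᵥ (fun i => U i k) = (μ k : ℂ) := by
      intro k
      rw [col_eig h k, dotProduct_smul, col_norm h k, smul_eq_mul, mul_one]
    have hbounds : ∀ k, μ k ≤ a + C ^ 2 / (4 * t) ∧ -K - t ≤ μ k := fun k =>
      rayleigh_bound A P hP hP2 v hv hPw a K ha hK_def t ht _ (col_norm h k) (μ k) (hμray k)
    -- sum of eigenvalues
    have hsum : ∑ k, μ k = (A.trace).re - t * ((m : ℝ) - 1) := by
      have h1 : (A - (t : ℂ) • P).trace = ∑ k, (μ k : ℂ) := trace_herm h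
      have h2 : (A - (t : ℂ) • P).trace = A.trace - (t : ℂ) * ((m : ℂ) - 1) := by
        rw [Matrix.trace_sub, Matrix.trace_smul, hPtr, smul_eq_mul]
      have h3 : ((∑ k, μ k : ℝ) : ℂ) = A.trace - ((t * ((m : ℝ) - 1) : ℝ) : ℂ) := by
        push_cast
        rw [← h1, h2]
        try push_cast
        try ring
      have h4 := congrArg Complex.re h3
      simpa using h4
    -- Peierls-type lower bound : a is below the max eigenvalue
    obtain ⟨k₀, -, hk₀⟩ := Finset.exists_max_image Finset.univ μ
      (Finset.univ_nonempty_iff.mpr ⟨⟨0, hm⟩⟩)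
    have hak₀ : a ≤ μ k₀ := by
      obtain ⟨hq1, hq2⟩ := weights_sum h v hv
      have hHv : star v ⬝ᵥ (A - (t : ℂ) • P) *ᵥ v = (a : ℂ) := by
        rw [Matrix.sub_mulVec, dotProduct_sub, Matrix.smul_mulVec, hPv0, smul_zero,
          dotProduct_zero, sub_zero, ha]
      set q : Fin m → ℝ := fun k => Complex.normSq ((star U *ᵥ v) k) with hq_def
      have hq1' : ∑ k, q k = 1 := by exact_mod_cast hq1
      have hq2' : ∑ k, μ k * q k = a := by
        have := hq2.symm.trans hHv
        exact_mod_cast this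
      calc a = ∑ k, μ k * q k := hq2'.symm
        _ ≤ ∑ k, μ k₀ * q k := Finset.sum_le_sum fun k _ =>
            mul_le_mul_of_nonneg_right (hk₀ k (Finset.mem_univ k)) (Complex.normSq_nonneg _)
        _ = μ k₀ * ∑ k, q k := by rw [Finset.mul_sum]
        _ = μ k₀ := by rw [hq1', mul_one]
    constructor
    · -- lower bound
      calc Real.exp a ≤ Real.exp (μ k₀) := Real.exp_le_exp.mpr hak₀
        _ ≤ ∑ k, Real.exp (μ k) :=
          Finset.single_le_sum (fun k _ => (Real.exp_pos (μ k)).le) (Finset.mem_univ k₀)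
    · -- upper bound
      have hsplit : ∑ k, Real.exp (μ k)
          = (∑ k ∈ Finset.univ.erase k₀, Real.exp (μ k)) + Real.exp (μ k₀) :=
        (Finset.sum_erase_add _ _ (Finset.mem_univ k₀)).symm
      have hother : ∀ k ∈ Finset.univ.erase k₀, μ k ≤ D - t := by
        intro k hk
        have hkne : k ≠ k₀ := Finset.ne_of_mem_erase hk
        have hm2 : 2 ≤ m := by
          have : Nontrivial (Fin m) := ⟨⟨k, k₀, hkne⟩⟩
          have h1m := Fintype.one_lt_card (α := Fin m)
          simp at h1m; omega
        have hsplit2 : (∑ j ∈ Finset.univ.erase k, μ j) + μ k = ∑ j, μ j :=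
          Finset.sum_erase_add _ _ (Finset.mem_univ k)
        have hk₀mem : k₀ ∈ Finset.univ.erase k := Finset.mem_erase.mpr ⟨fun h' => hkne h'.symm, Finset.mem_univ _⟩
        have hsplit3 : (∑ j ∈ (Finset.univ.erase k).erase k₀, μ j) + μ k₀
            = ∑ j ∈ Finset.univ.erase k, μ j :=
          Finset.sum_erase_add _ _ hk₀mem
        have hcard : (((Finset.univ.erase k).erase k₀).card : ℝ) = (m : ℝ) - 2 := by
          rw [Finset.card_erase_of_mem hk₀mem, Finset.card_erase_of_mem (Finset.mem_univ k)]
          simp only [Finset.card_univ, Fintype.card_fin]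
          rw [Nat.cast_sub (by omega), Nat.cast_sub (by omega)]
          push_cast
          ring
        have hlow : ((m : ℝ) - 2) * (-K - t) ≤ ∑ j ∈ (Finset.univ.erase k).erase k₀, μ j := by
          rw [← hcard]
          have := Finset.card_nsmul_le_sum ((Finset.univ.erase k).erase k₀) μ (-K - t)
            (fun j _ => (hbounds j).2)
          rw [nsmul_eq_mul] at this
          exact this
        have := hsum
        nlinarith [hak₀, hK0, (by exact_mod_cast hm2 : (2:ℝ) ≤ (m:ℝ)), ht]
      calc ∑ k, Real.exp (μ k)
          = (∑ k ∈ Finset.univ.erase k₀, Real.exp (μ k)) + Real.exp (μ k₀) := hsplit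
        _ ≤ (∑ k ∈ Finset.univ.erase k₀, Real.exp (D - t)) + Real.exp (a + C ^ 2 / (4 * t)) := by
            gcongr with k hk
            · exact hother k hk
            · exact (hbounds k₀).1
        _ ≤ m * Real.exp (D - t) + Real.exp (a + C ^ 2 / (4 * t)) := by
            rw [Finset.sum_const, nsmul_eq_mul]
            have hcard' : ((Finset.univ.erase k₀).card : ℝ) ≤ (m : ℝ) := by
              have h1 : (Finset.univ.erase k₀).card ≤ m := by
                calc (Finset.univ.erase k₀).card ≤ Finset.univ.card :=
                      Finset.card_le_card (Finset.erase_subset _ _)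
                  _ = m := by simp
              exact_mod_cast h1
            have := mul_le_mul_of_nonneg_right hcard' (Real.exp_pos (D - t)).le
            linarith
        _ = Real.exp (a + C ^ 2 / (4 * t)) + m * Real.exp (D - t) := by ring
  -- limits of the bounding functions
  have hup : Filter.Tendsto (fun t : ℝ => Real.exp (a + C ^ 2 / (4 * t)) + m * Real.exp (D - t))
      Filter.atTop (nhds (Real.exp a)) := by
    have h1 : Filter.Tendsto (fun t : ℝ => C ^ 2 / (4 * t)) Filter.atTop (nhds 0) :=
      Filter.Tendsto.div_atTop tendsto_const_nhds
        (Filter.Tendsto.const_mul_atTop (by norm_num : (0:ℝ) < 4) Filter.tendsto_id)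
    have h2 : Filter.Tendsto (fun t : ℝ => a + C ^ 2 / (4 * t)) Filter.atTop (nhds (a + 0)) :=
      tendsto_const_nhds.add h1
    have h3 : Filter.Tendsto (fun t : ℝ => Real.exp (a + C ^ 2 / (4 * t))) Filter.atTop (nhds (Real.exp (a + 0))) :=
      (Real.continuous_exp.tendsto _).comp h2
    have h4 : Filter.Tendsto (fun t : ℝ => D - t) Filter.atTop Filter.atBot := by
      apply Filter.tendsto_atBot_add_const_left
      exact Filter.tendsto_neg_atBot_iff.mpr Filter.tendsto_id
    have h5 : Filter.Tendsto (fun t : ℝ => Real.exp (D - t)) Filter.atTop (nhds 0) :=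
      Real.tendsto_exp_atBot.comp h4
    have h6 : Filter.Tendsto (fun t : ℝ => (m : ℝ) * Real.exp (D - t)) Filter.atTop (nhds ((m : ℝ) * 0)) :=
      tendsto_const_nhds.mul h5
    have := h3.add h6
    simpa using this
  have hmain : Filter.Tendsto (fun t : ℝ => ∑ k, Real.exp ((hherm t).eigenvalues k))
      Filter.atTop (nhds (Real.exp a)) := by
    apply tendsto_of_tendsto_of_tendsto_of_le_of_le' tendsto_const_nhds hup
    · filter_upwards [Filter.eventually_ge_atTop (1:ℝ)] with t ht
      exact (hfacts t ht).1
    · filter_upwards [Filter.eventually_ge_atTop (1:ℝ)] with t ht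
      exact (hfacts t ht).2
  have hgoal : Complex.exp (star v ⬝ᵥ A *ᵥ v) = ((Real.exp a : ℝ) : ℂ) := by
    rw [ha, Complex.ofReal_exp]
  rw [show A.mulVec v = A *ᵥ v from rfl, hgoal]
  have := (Complex.continuous_ofReal.tendsto (Real.exp a)).comp hmain
  exact this.congr fun t => (htr t).symm

end
end

section
/- Let A be a self-adjoint complex m×m matrix (m ≥ 2) and let P be an orthogonal projection on ℂ^m with ker P = span{v} for a unit vector v. Then the eigenvalues of A − tP (repeated with multiplicity) can be enumerated as λ_1(t), …, λ_m(t) for t > 0 in such a way that λ_1(t) → ⟨v, Av⟩ as t → ∞, and λ_j(t)/t → −1 as t → ∞ for each j = 2, …, m. -/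
open MeasureTheory
open scoped Kronecker

noncomputable section

set_option maxHeartbeats 2000000 in
open Matrix in
/-- Asymptotics of the eigenvalues of `A − tP` : one eigenvalue tends to `⟨v, Av⟩` and the
remaining `m − 1` eigenvalues are `−t + o(t)`. -/
theorem eigenvalues_sub_proj_asymptotics {m : ℕ} (hm : 2 ≤ m)
    (A P : Matrix (Fin m) (Fin m) ℂ)
    (hA : A.IsHermitian) (hP : P.IsHermitian) (hP2 : P * P = P)
    (v : Fin m → ℂ) (hv : star v ⬝ᵥ v = 1)
    (hker : ∀ w : Fin m → ℂ, P.mulVec w = 0 ↔ ∃ c : ℂ, w = c • v) :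
    ∃ lam : ℝ → Fin m → ℝ,
      (∀ t : ℝ, 0 < t →
        ∃ (h : (A - (t : ℂ) • P).IsHermitian) (σ : Equiv.Perm (Fin m)),
          ∀ i, lam t i = h.eigenvalues (σ i)) ∧
      Filter.Tendsto (fun t => lam t ⟨0, by omega⟩) Filter.atTop
        (nhds (star v ⬝ᵥ A.mulVec v).re) ∧
      ∀ j : Fin m, j ≠ ⟨0, by omega⟩ →
        Filter.Tendsto (fun t => lam t j / t) Filter.atTop (nhds (-1)) := by
  classical
  have hn : Nonempty (Fin m) := ⟨⟨0, by omega⟩⟩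
  set n0 : Fin m := ⟨0, by omega⟩ with hn0
  set C : ℝ := (∑ i, ∑ j, ‖A i j‖) + 1 with hCdef
  have hS : (0:ℝ) ≤ ∑ i, ∑ j, ‖A i j‖ := by positivity
  have hC1 : 1 ≤ C := by simp only [hCdef]; linarith
  have hC0 : 0 < C := by linarith
  -- coordinates bounded by norm
  have hcoord : ∀ (x : EuclideanSpace ℂ (Fin m)) (i : Fin m), ‖x i‖ ≤ ‖x‖ := by
    intro x i
    rw [EuclideanSpace.norm_eq, show ‖x i‖ = Real.sqrt (‖x i‖^2) from (Real.sqrt_sq (norm_nonneg _)).symm]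
    exact Real.sqrt_le_sqrt (Finset.single_le_sum (f := fun j => ‖x j‖^2)
      (fun j _ => sq_nonneg _) (Finset.mem_univ i))
  -- quadratic form bound
  have hB : ∀ x y : EuclideanSpace ℂ (Fin m),
      ‖star (x : Fin m → ℂ) ⬝ᵥ A.mulVec (y : Fin m → ℂ)‖ ≤ C * (‖x‖ * ‖y‖) := by
    intro x y
    have h1 : star (x : Fin m → ℂ) ⬝ᵥ A.mulVec (y : Fin m → ℂ)
        = ∑ i, ∑ j, (starRingEnd ℂ) (x i) * (A i j * y j) := by
      simp [dotProduct, Matrix.mulVec, Finset.mul_sum, Pi.star_apply, RCLike.star_def]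
    rw [h1]
    calc ‖∑ i, ∑ j, (starRingEnd ℂ) (x i) * (A i j * y j)‖
        ≤ ∑ i, ∑ j, ‖(starRingEnd ℂ) (x i) * (A i j * y j)‖ := by
          apply norm_sum_le _ _ |>.trans
          exact Finset.sum_le_sum fun i _ => norm_sum_le _ _
      _ ≤ ∑ i, ∑ j, ‖A i j‖ * (‖x‖ * ‖y‖) := by
          apply Finset.sum_le_sum; intro i _; apply Finset.sum_le_sum; intro j _
          rw [norm_mul, norm_mul]
          have h2 : ‖(starRingEnd ℂ) (x i)‖ ≤ ‖x‖ := by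
            rw [RCLike.norm_conj]; exact hcoord x i
          have h3 : ‖y j‖ ≤ ‖y‖ := hcoord y j
          have : ‖A i j‖ = ‖A i j‖ := rfl
          rw [this]
          calc ‖(starRingEnd ℂ) (x i)‖ * (‖A i j‖ * ‖y j‖)
              ≤ ‖x‖ * (‖A i j‖ * ‖y‖) := by
                apply mul_le_mul h2 (by
                  apply mul_le_mul_of_nonneg_left h3 (norm_nonneg _))
                  (by positivity) (norm_nonneg _)
            _ = ‖A i j‖ * (‖x‖ * ‖y‖) := by ring
      _ = (∑ i, ∑ j, ‖A i j‖) * (‖x‖ * ‖y‖) := by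
          rw [Finset.sum_mul]; congr 1; ext i; rw [Finset.sum_mul]
      _ ≤ C * (‖x‖ * ‖y‖) := by
          apply mul_le_mul_of_nonneg_right _ (by positivity)
          simp only [hCdef]; linarith
  -- kernel facts
  have hPv : P *ᵥ v = 0 := (hker v).mpr ⟨1, (one_smul ℂ v).symm⟩
  have hvP : ∀ w : Fin m → ℂ, star v ⬝ᵥ (P *ᵥ w) = 0 := by
    intro w
    rw [Matrix.dotProduct_mulVec]
    have h0 : star v ᵥ* P = 0 := by
      have h1 := congrArg star hPv
      rw [Matrix.star_mulVec, hP.eq] at h1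
      simpa using h1
    rw [h0, zero_dotProduct]
  have hPw : ∀ w : Fin m → ℂ, P *ᵥ w = w - (star v ⬝ᵥ w) • v := by
    intro w
    obtain ⟨c, hc⟩ := (hker (w - P *ᵥ w)).mp (by
      rw [Matrix.mulVec_sub, Matrix.mulVec_mulVec, hP2, sub_self])
    have h2 : star v ⬝ᵥ (w - P *ᵥ w) = c := by
      rw [hc, dotProduct_smul, hv]; simp
    rw [dotProduct_sub, hvP, sub_zero] at h2
    rw [← h2] at hc
    rw [← hc]; abel
  -- Hermitian
  have hM : ∀ t : ℝ, (A - (t : ℂ) • P).IsHermitian := by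
    intro t
    have h1 : ((t:ℂ) • P).IsHermitian := by
      unfold Matrix.IsHermitian
      rw [Matrix.conjTranspose_smul, hP.eq, Complex.star_def, Complex.conj_ofReal]
    exact hA.sub h1
  have hex : ∀ t : ℝ, ∃ i : Fin m, ∀ j, (hM t).eigenvalues j ≤ (hM t).eigenvalues i :=
    fun t => Finite.exists_max _
  choose imax himax using hex
  set lam : ℝ → Fin m → ℝ :=
    fun t i => (hM t).eigenvalues (Equiv.swap n0 (imax t) i) with hlam
  set rv : ℝ := (star v ⬝ᵥ A *ᵥ v).re with hrv
  set E : ℝ → ℝ := fun t => 4*C^2/t + 2*C*Real.sqrt (2*C/t) with hE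
  set toE : (Fin m → ℂ) → EuclideanSpace ℂ (Fin m) := fun x => (WithLp.equiv 2 (Fin m → ℂ)).symm x with htoE
  have hinner : ∀ x y : Fin m → ℂ, (inner (𝕜 := ℂ) (toE x) (toE y) : ℂ) = star x ⬝ᵥ y :=
    fun _ _ => by rw [dotProduct_comm]; rfl
  have hnormsq : ∀ x : Fin m → ℂ, ‖toE x‖ ^ 2 = (star x ⬝ᵥ x).re := by
    intro x
    have h1 : (RCLike.re (inner (𝕜 := ℂ) (toE x) (toE x)) : ℝ) = ‖toE x‖ ^ 2 :=
      inner_self_eq_norm_sq _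
    rw [hinner] at h1
    exact h1.symm
  -- norm of v is 1
  have hvE : ‖toE v‖ = 1 := by
    have h3 : ‖toE v‖ ^ 2 = 1 := by rw [hnormsq, hv]; simp
    nlinarith [norm_nonneg (toE v)]
  have hrvC : |rv| ≤ C := by
    have h1 := hB (toE v) (toE v)
    rw [hvE] at h1
    calc |rv| ≤ ‖star v ⬝ᵥ A *ᵥ v‖ := Complex.abs_re_le_norm _
      _ ≤ C * (1 * 1) := h1
      _ = C := by ring
  have main : ∀ t : ℝ, 0 < t →
      (rv ≤ (hM t).eigenvalues (imax t) ∧ (hM t).eigenvalues (imax t) ≤ rv + E t) ∧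
      ∀ i : Fin m, i ≠ imax t → |(hM t).eigenvalues i + t| ≤ 3*C := by
    intro t ht
    set b := (hM t).eigenvectorBasis with hb
    set ev := (hM t).eigenvalues with hev
    set c : Fin m → ℂ := fun i => star v ⬝ᵥ (b i : Fin m → ℂ) with hcdef
    have horth : ∀ i j : Fin m, star (b i : Fin m → ℂ) ⬝ᵥ (b j : Fin m → ℂ)
        = if i = j then 1 else 0 := fun i j => by
          rw [dotProduct_comm]; exact (orthonormal_iff_ite.mp b.orthonormal) i j
    have hbn : ∀ i, star (b i : Fin m → ℂ) ⬝ᵥ (b i : Fin m → ℂ) = 1 := by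
      intro i; rw [horth i i]; simp
    have hbv : ∀ i, star (b i : Fin m → ℂ) ⬝ᵥ v = star (c i) := by
      intro i; rw [Matrix.star_dotProduct]
    have heig : ∀ i, (A - (t:ℂ) • P) *ᵥ (b i : Fin m → ℂ) = (ev i : ℂ) • (b i : Fin m → ℂ) := by
      intro i
      funext j
      have h1 := congrFun ((hM t).mulVec_eigenvectorBasis i) j
      simpa [Complex.real_smul] using h1
    have hpse : ∀ i, star (b i : Fin m → ℂ) ⬝ᵥ (P *ᵥ (b i : Fin m → ℂ))
        = 1 - (Complex.normSq (c i) : ℂ) := by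
      intro i
      rw [hPw, dotProduct_sub, dotProduct_smul, hbn, hbv, smul_eq_mul]
      rw [show star v ⬝ᵥ (b i : Fin m → ℂ) = c i from rfl, Complex.star_def, Complex.mul_conj]
    have hray : ∀ i, ev i = (star (b i : Fin m → ℂ) ⬝ᵥ (A *ᵥ (b i : Fin m → ℂ))).re
        - t * (1 - Complex.normSq (c i)) := by
      intro i
      have h0 : ev i = (star (b i : Fin m → ℂ) ⬝ᵥ ((A - (t:ℂ)•P) *ᵥ (b i : Fin m → ℂ))).re :=
        (hM t).eigenvalues_eq i
      rw [h0, Matrix.sub_mulVec, Matrix.smul_mulVec, dotProduct_sub,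
        dotProduct_smul, hpse, smul_eq_mul]
      simp [Complex.sub_re, Complex.mul_re]
    have hbnorm : ∀ i, ‖b i‖ = 1 := fun i => b.orthonormal.1 i
    have habnd : ∀ i, |(star (b i : Fin m → ℂ) ⬝ᵥ (A *ᵥ (b i : Fin m → ℂ))).re| ≤ C := by
      intro i
      have h1 := hB (b i) (b i)
      rw [hbnorm] at h1
      calc |(star (b i : Fin m → ℂ) ⬝ᵥ (A *ᵥ (b i : Fin m → ℂ))).re|
          ≤ ‖star (b i : Fin m → ℂ) ⬝ᵥ (A *ᵥ (b i : Fin m → ℂ))‖ := Complex.abs_re_le_norm _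
        _ ≤ C * (1 * 1) := h1
        _ = C := by ring
    have hparC : ∑ i, c i * star (c i) = 1 := by
      calc ∑ i, c i * star (c i)
          = ∑ i, (inner ℂ (toE v) (b i) : ℂ) * inner ℂ (b i) (toE v) := by
            apply Finset.sum_congr rfl; intro i _
            have e0 : (inner ℂ (toE v) (b i) : ℂ) = c i := hinner v (b i)
            have e1 : (inner ℂ (b i) (toE v) : ℂ) = star (c i) := (hinner (b i) v).trans (hbv i)
            rw [e0, e1]
        _ = inner ℂ (toE v) (toE v) := b.sum_inner_mul_inner _ _
        _ = 1 := by rw [hinner, hv]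
    have hpar : ∑ i, Complex.normSq (c i) = 1 := by
      have h2 : ((∑ i, Complex.normSq (c i) : ℝ) : ℂ) = 1 := by
        push_cast
        rw [← hparC]
        apply Finset.sum_congr rfl; intro i _
        rw [Complex.star_def, Complex.mul_conj]
      exact_mod_cast h2
    have hMv : (A - (t:ℂ)•P) *ᵥ v = A *ᵥ v := by
      rw [Matrix.sub_mulVec, Matrix.smul_mulVec, hPv, smul_zero, sub_zero]
    have hbMv : ∀ i, star (b i : Fin m → ℂ) ⬝ᵥ (A *ᵥ v) = (ev i : ℂ) * star (c i) := by
      intro i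
      rw [← hMv, Matrix.dotProduct_mulVec,
        show star (b i : Fin m → ℂ) ᵥ* (A - (t:ℂ)•P)
            = star ((A - (t:ℂ)•P) *ᵥ (b i : Fin m → ℂ)) from by
          rw [Matrix.star_mulVec, (hM t).eq],
        heig i, star_smul, smul_dotProduct, hbv i, smul_eq_mul,
        Complex.star_def, Complex.conj_ofReal]
    have htrC : ∑ i, (ev i : ℂ) * (c i * star (c i)) = star v ⬝ᵥ (A *ᵥ v) := by
      calc ∑ i, (ev i:ℂ) * (c i * star (c i))
          = ∑ i, (inner ℂ (toE v) (b i) : ℂ) * inner ℂ (b i) (toE (A *ᵥ v)) := by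
            apply Finset.sum_congr rfl; intro i _
            have e0 : (inner ℂ (toE v) (b i) : ℂ) = c i := hinner v (b i)
            have e1 : (inner ℂ (b i) (toE (A *ᵥ v)) : ℂ) = (ev i:ℂ) * star (c i) := (hinner (b i) (A *ᵥ v)).trans (hbMv i)
            rw [e0, e1]; ring
        _ = inner ℂ (toE v) (toE (A *ᵥ v)) := b.sum_inner_mul_inner _ _
        _ = star v ⬝ᵥ (A *ᵥ v) := hinner _ _
    have htr : ∑ i, ev i * Complex.normSq (c i) = rv := by
      have h1 : ∑ i, ((ev i * Complex.normSq (c i) : ℝ) : ℂ) = star v ⬝ᵥ (A *ᵥ v) := by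
        rw [← htrC]
        apply Finset.sum_congr rfl; intro i _
        rw [Complex.star_def, Complex.mul_conj]
        push_cast
        ring
      rw [← Complex.ofReal_sum] at h1
      rw [hrv, ← h1, Complex.ofReal_re]
    have hnsq1 : ∀ i, Complex.normSq (c i) ≤ 1 := by
      intro i
      have h1 := Finset.single_le_sum (f := fun i => Complex.normSq (c i))
        (fun j _ => Complex.normSq_nonneg _) (Finset.mem_univ i)
      rw [hpar] at h1
      exact h1
    have key1 : rv ≤ ev (imax t) := by
      rw [← htr]
      calc ∑ i, ev i * Complex.normSq (c i)
          ≤ ∑ i, ev (imax t) * Complex.normSq (c i) :=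
            Finset.sum_le_sum fun i _ =>
              mul_le_mul_of_nonneg_right (himax t i) (Complex.normSq_nonneg _)
        _ = ev (imax t) * ∑ i, Complex.normSq (c i) := by rw [Finset.mul_sum]
        _ = ev (imax t) := by rw [hpar, mul_one]
    have key2 : t * (1 - Complex.normSq (c (imax t))) ≤ 2*C := by
      have h1 := hray (imax t)
      have h3 := abs_le.mp (habnd (imax t))
      have h4 := abs_le.mp hrvC
      linarith
    have part2 : ∀ i : Fin m, i ≠ imax t → |ev i + t| ≤ 3*C := by
      intro i hi
      have hsum2 : Complex.normSq (c i) + Complex.normSq (c (imax t)) ≤ 1 := by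
        rw [← hpar]
        have h6 := Finset.sum_le_sum_of_subset_of_nonneg
          (Finset.subset_univ ({i, imax t} : Finset (Fin m)))
          (fun j _ _ => Complex.normSq_nonneg (c j))
        rw [Finset.sum_pair hi] at h6
        exact h6
      have h7 : t * Complex.normSq (c i) ≤ 2*C := by
        have h70 : Complex.normSq (c i) ≤ 1 - Complex.normSq (c (imax t)) := by linarith
        have := mul_le_mul_of_nonneg_left h70 ht.le
        linarith
      have h8 : 0 ≤ t * Complex.normSq (c i) := mul_nonneg ht.le (Complex.normSq_nonneg _)
      have h9 := abs_le.mp (habnd i)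
      have h10 : ev i + t = (star (b i : Fin m → ℂ) ⬝ᵥ (A *ᵥ (b i : Fin m → ℂ))).re
          + t * Complex.normSq (c i) := by rw [hray i]; ring
      rw [abs_le]
      constructor <;> linarith
    refine ⟨⟨key1, ?_⟩, part2⟩
    -- upper bound for top eigenvalue
    set bv : Fin m → ℂ := fun j => b (imax t) j with hbvdef
    have hbnb : star bv ⬝ᵥ bv = 1 := hbn (imax t)
    have hbvb : star bv ⬝ᵥ v = star (c (imax t)) := hbv (imax t)
    have hrayb : ev (imax t) = (star bv ⬝ᵥ (A *ᵥ bv)).re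
        - t * (1 - Complex.normSq (c (imax t))) := hray (imax t)
    have habndb : |(star bv ⬝ᵥ (A *ᵥ bv)).re| ≤ C := habnd (imax t)
    set u : Fin m → ℂ := bv - c (imax t) • v with hu
    have hvb : star v ⬝ᵥ bv = c (imax t) := rfl
    have husq : ‖toE u‖^2 = 1 - Complex.normSq (c (imax t)) := by
      rw [hnormsq]
      have e1 : star u ⬝ᵥ u = 1 - (Complex.normSq (c (imax t)) : ℂ) := by
        rw [hu, star_sub, star_smul, sub_dotProduct, dotProduct_sub,
          dotProduct_sub, smul_dotProduct, smul_dotProduct,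
          dotProduct_smul, dotProduct_smul, hbnb, hbvb, hvb, hv]
        simp only [smul_eq_mul, mul_one, Complex.star_def, Complex.mul_conj]
        rw [show (starRingEnd ℂ) (c (imax t)) * c (imax t)
            = (Complex.normSq (c (imax t)) : ℂ) from by rw [mul_comm, Complex.mul_conj]]
        ring
      rw [e1]
      simp
    have husq_le : ‖toE u‖^2 ≤ 2*C/t := by
      rw [husq, le_div_iff₀ ht, mul_comm]
      exact key2
    have hu_le : ‖toE u‖ ≤ Real.sqrt (2*C/t) := by
      rw [← Real.sqrt_sq (norm_nonneg (toE u))]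
      exact Real.sqrt_le_sqrt husq_le
    have hc0le : ‖c (imax t)‖ ≤ 1 := by
      have h1 : ‖c (imax t)‖ ^ 2 = Complex.normSq (c (imax t)) := Complex.sq_norm _
      nlinarith [norm_nonneg (c (imax t)), hnsq1 (imax t)]
    have hdecomp : bv = c (imax t) • v + u := by rw [hu]; abel
    have expand : star bv ⬝ᵥ (A *ᵥ bv)
          - star v ⬝ᵥ (A *ᵥ v)
        = ((Complex.normSq (c (imax t)) : ℂ) - 1) * (star v ⬝ᵥ (A *ᵥ v))
          + star (c (imax t)) * (star v ⬝ᵥ (A *ᵥ u))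
          + c (imax t) * (star u ⬝ᵥ (A *ᵥ v))
          + star u ⬝ᵥ (A *ᵥ u) := by
      conv_lhs => rw [hdecomp]
      simp only [Matrix.mulVec_add, Matrix.mulVec_smul, star_add, star_smul,
        add_dotProduct, smul_dotProduct, dotProduct_add,
        dotProduct_smul, smul_eq_mul]
      rw [show ((Complex.normSq (c (imax t)) : ℂ)) = star (c (imax t)) * c (imax t) from by
        rw [Complex.star_def, mul_comm, Complex.mul_conj]]
      ring
    have hBvu : ‖star v ⬝ᵥ (A *ᵥ u)‖ ≤ C * ‖toE u‖ := by
      have h1 := hB (toE v) (toE u)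
      rw [hvE, one_mul] at h1
      exact h1
    have hBuv : ‖star u ⬝ᵥ (A *ᵥ v)‖ ≤ C * ‖toE u‖ := by
      have h1 := hB (toE u) (toE v)
      rw [hvE, mul_one] at h1
      exact h1
    have hBuu : ‖star u ⬝ᵥ (A *ᵥ u)‖ ≤ C * (‖toE u‖ * ‖toE u‖) := hB (toE u) (toE u)
    have hBvv : ‖star v ⬝ᵥ (A *ᵥ v)‖ ≤ C := by
      have h1 := hB (toE v) (toE v)
      rw [hvE] at h1
      calc ‖star v ⬝ᵥ (A *ᵥ v)‖ ≤ C * (1*1) := h1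
        _ = C := by ring
    have hnormel : ‖((Complex.normSq (c (imax t)) : ℂ) - 1)‖ = ‖toE u‖^2 := by
      rw [show ((Complex.normSq (c (imax t)) : ℂ) - 1)
          = ((Complex.normSq (c (imax t)) - 1 : ℝ) : ℂ) from by push_cast; ring,
        Complex.norm_real, husq, Real.norm_eq_abs,
        abs_of_nonpos (show Complex.normSq (c (imax t)) - 1 ≤ 0 by linarith [hnsq1 (imax t)])]
      ring
    have habsdiff : |(star bv ⬝ᵥ (A *ᵥ bv)).re - rv|
        ≤ 2*C*‖toE u‖^2 + 2*C*‖toE u‖ := by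
      have h0 : |(star bv ⬝ᵥ (A *ᵥ bv)).re - rv|
          ≤ ‖star bv ⬝ᵥ (A *ᵥ bv)
              - star v ⬝ᵥ (A *ᵥ v)‖ := by
        rw [hrv, ← Complex.sub_re]
        exact Complex.abs_re_le_norm _
      rw [expand] at h0
      set X1 : ℂ := ((Complex.normSq (c (imax t)) : ℂ) - 1) * (star v ⬝ᵥ (A *ᵥ v)) with hX1
      set X2 : ℂ := star (c (imax t)) * (star v ⬝ᵥ (A *ᵥ u)) with hX2
      set X3 : ℂ := c (imax t) * (star u ⬝ᵥ (A *ᵥ v)) with hX3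
      set X4 : ℂ := star u ⬝ᵥ (A *ᵥ u) with hX4
      have h1 : ‖X1 + X2 + X3 + X4‖
          ≤ ‖toE u‖^2 * C + 1 * (C * ‖toE u‖) + 1 * (C * ‖toE u‖) + C * (‖toE u‖ * ‖toE u‖) := by
        have t1 : ‖X1‖ ≤ ‖toE u‖^2 * C := by
          rw [hX1, norm_mul, hnormel]
          exact mul_le_mul_of_nonneg_left hBvv (by positivity)
        have t2 : ‖X2‖ ≤ 1 * (C * ‖toE u‖) := by
          rw [hX2, norm_mul]
          apply mul_le_mul (by simpa [Complex.star_def] using hc0le) hBvu (norm_nonneg _) zero_le_one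
        have t3 : ‖X3‖ ≤ 1 * (C * ‖toE u‖) := by
          rw [hX3, norm_mul]
          exact mul_le_mul hc0le hBuv (norm_nonneg _) zero_le_one
        have t4 : ‖X4‖ ≤ C * (‖toE u‖ * ‖toE u‖) := by rw [hX4]; exact hBuu
        calc ‖X1 + X2 + X3 + X4‖ ≤ ‖X1 + X2 + X3‖ + ‖X4‖ := norm_add_le _ _
          _ ≤ (‖X1 + X2‖ + ‖X3‖) + ‖X4‖ := by gcongr; exact norm_add_le _ _
          _ ≤ ((‖X1‖ + ‖X2‖) + ‖X3‖) + ‖X4‖ := by gcongr; exact norm_add_le _ _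
          _ ≤ _ := by
            exact add_le_add (add_le_add (add_le_add t1 t2) t3) t4
      calc |(star bv ⬝ᵥ (A *ᵥ bv)).re - rv|
          ≤ ‖toE u‖^2 * C + 1 * (C * ‖toE u‖) + 1 * (C * ‖toE u‖) + C * (‖toE u‖ * ‖toE u‖) :=
            h0.trans h1
        _ = 2*C*‖toE u‖^2 + 2*C*‖toE u‖ := by ring
    have hev_le_a : ev (imax t) ≤ (star bv ⬝ᵥ
        (A *ᵥ bv)).re := by
      have h1 := hrayb
      have h2 : 0 ≤ t * (1 - Complex.normSq (c (imax t))) :=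
        mul_nonneg ht.le (by linarith [hnsq1 (imax t)])
      linarith
    have hsq1 : 2*C*‖toE u‖^2 ≤ 2*C*(2*C/t) := by
      apply mul_le_mul_of_nonneg_left husq_le (by positivity)
    have hsq2 : 2*C*‖toE u‖ ≤ 2*C*Real.sqrt (2*C/t) := by
      apply mul_le_mul_of_nonneg_left hu_le (by positivity)
    have hEeq : rv + E t = rv + (4*C^2/t + 2*C*Real.sqrt (2*C/t)) := by rw [hE]
    rw [hEeq]
    have habs2 := (abs_le.mp habsdiff).2
    have hfin : 2*C*(2*C/t) = 4*C^2/t := by ring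
    have s1 : ev (imax t) ≤ rv + (2*C*‖toE u‖^2 + 2*C*‖toE u‖) := by
      linarith only [hev_le_a, habs2]
    have s2 : ev (imax t) ≤ rv + (2*C*(2*C/t) + 2*C*Real.sqrt (2*C/t)) :=
      s1.trans (add_le_add le_rfl (add_le_add hsq1 hsq2))
    calc ev (imax t) ≤ rv + (2*C*(2*C/t) + 2*C*Real.sqrt (2*C/t)) := s2
      _ = rv + (4*C^2/t + 2*C*Real.sqrt (2*C/t)) := by rw [hfin]
  have hE0 : Filter.Tendsto E Filter.atTop (nhds 0) := by
    have h2 : Filter.Tendsto (fun t : ℝ => 2*C/t) Filter.atTop (nhds 0) :=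
      Filter.Tendsto.div_atTop tendsto_const_nhds Filter.tendsto_id
    have h1 : Filter.Tendsto (fun t : ℝ => 4*C^2/t) Filter.atTop (nhds 0) :=
      Filter.Tendsto.div_atTop tendsto_const_nhds Filter.tendsto_id
    have h3 : Filter.Tendsto (fun t : ℝ => Real.sqrt (2*C/t)) Filter.atTop (nhds 0) := by
      have h4 := (Real.continuous_sqrt.tendsto 0).comp h2
      simpa [Function.comp_def] using h4
    have h5 := h1.add (h3.const_mul (2*C))
    rw [hE]
    simpa using h5
  have h3C : Filter.Tendsto (fun t : ℝ => 3*C/t) Filter.atTop (nhds 0) :=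
    Filter.Tendsto.div_atTop tendsto_const_nhds Filter.tendsto_id
  refine ⟨lam, fun t _ => ⟨hM t, Equiv.swap n0 (imax t), fun i => rfl⟩, ?_, ?_⟩
  · have hlam0 : ∀ t : ℝ, lam t ⟨0, by omega⟩ = (hM t).eigenvalues (imax t) := by
      intro t
      show (hM t).eigenvalues (Equiv.swap n0 (imax t) n0) = _
      rw [Equiv.swap_apply_left]
    apply tendsto_of_tendsto_of_tendsto_of_le_of_le'
      (tendsto_const_nhds : Filter.Tendsto (fun _ : ℝ => rv) Filter.atTop (nhds rv))
      (show Filter.Tendsto (fun t : ℝ => rv + E t) Filter.atTop (nhds rv) by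
        simpa using tendsto_const_nhds.add hE0)
    · filter_upwards [Filter.eventually_gt_atTop 0] with t ht
      rw [hlam0 t]
      exact (main t ht).1.1
    · filter_upwards [Filter.eventually_gt_atTop 0] with t ht
      rw [hlam0 t]
      exact (main t ht).1.2
  · intro j hj
    have hne : ∀ t : ℝ, Equiv.swap n0 (imax t) j ≠ imax t := by
      intro t hcontra
      exact hj ((Equiv.swap n0 (imax t)).injective
        (hcontra.trans (Equiv.swap_apply_left n0 (imax t)).symm))
    apply tendsto_of_tendsto_of_tendsto_of_le_of_le'
      (show Filter.Tendsto (fun t : ℝ => -1 - 3*C/t) Filter.atTop (nhds (-1)) by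
        simpa using (tendsto_const_nhds (x := (-1:ℝ)) (f := Filter.atTop)).sub h3C)
      (show Filter.Tendsto (fun t : ℝ => -1 + 3*C/t) Filter.atTop (nhds (-1)) by
        simpa using (tendsto_const_nhds (x := (-1:ℝ)) (f := Filter.atTop)).add h3C)
    · filter_upwards [Filter.eventually_gt_atTop 0] with t ht
      have h1 := abs_le.mp ((main t ht).2 _ (hne t))
      have e : lam t j / t = ((hM t).eigenvalues (Equiv.swap n0 (imax t) j) + t)/t - 1 := by
        show (hM t).eigenvalues (Equiv.swap n0 (imax t) j) / t = _
        field_simp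
        ring
      rw [e]
      have h2 : (-(3*C))/t ≤ ((hM t).eigenvalues (Equiv.swap n0 (imax t) j) + t)/t := by
        gcongr
        exact h1.1
      have h3 : (-(3*C))/t = -(3*C/t) := by ring
      linarith only [h2, h3.le, h3.ge]
    · filter_upwards [Filter.eventually_gt_atTop 0] with t ht
      have h1 := abs_le.mp ((main t ht).2 _ (hne t))
      have e : lam t j / t = ((hM t).eigenvalues (Equiv.swap n0 (imax t) j) + t)/t - 1 := by
        show (hM t).eigenvalues (Equiv.swap n0 (imax t) j) / t = _
        field_simp
        ring
      rw [e]
      have h2 : ((hM t).eigenvalues (Equiv.swap n0 (imax t) j) + t)/t ≤ (3*C)/t := by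
        gcongr
        exact h1.2
      linarith only [h2]


end
end
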